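/- arXiv:2209.13938 — 5 statements merged into one kernel-verified Lean document; each statement's English description precedes it below -/
import Mathlib

section
/- Let G be a (2 × 2)-game and set Y₁ = X¹ 1 1 − X¹ 2 1, Y₂ = X¹ 1 2 − X¹ 2 2, Z₁ = X² 1 1 − X² 1 2, Z₂ = X² 2 1 − X² 2 2, and assume Y₁, Y₂, Z₁, Z₂ are all nonzero. Then the correlated equilibrium polytope P_G has maximal dimension 3 (the dimension of the direction of its affine span equals 3) if and only if either (Y₁ > 0 ∧ Y₂ < 0 ∧ Z₁ > 0 ∧ Z₂ < 0) or (Y₁ < 0 ∧ Y₂ > 0 ∧ Z₁ < 0 ∧ Z₂ > 0). -/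
/-- The correlated equilibrium polytope of a `(2 × 2)`-game. -/
def CorrelatedEqPolytope (X1 X2 : Fin 2 → Fin 2 → ℝ) :
    Set (Fin 2 → Fin 2 → ℝ) :=
  {p | (∀ j k, 0 ≤ p j k) ∧ (∑ j, ∑ k, p j k = 1) ∧
    (∀ k l : Fin 2, 0 ≤ ∑ j, (X1 k j - X1 l j) * p k j) ∧
    (∀ k l : Fin 2, 0 ≤ ∑ i, (X2 i k - X2 i l) * p i k)}

lemma mem_CEP_iff (X1 X2 p : Fin 2 → Fin 2 → ℝ) :
    p ∈ CorrelatedEqPolytope X1 X2 ↔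
      (0 ≤ p 0 0 ∧ 0 ≤ p 0 1 ∧ 0 ≤ p 1 0 ∧ 0 ≤ p 1 1) ∧
      p 0 0 + p 0 1 + p 1 0 + p 1 1 = 1 ∧
      0 ≤ (X1 0 0 - X1 1 0) * p 0 0 + (X1 0 1 - X1 1 1) * p 0 1 ∧
      0 ≤ (X1 1 0 - X1 0 0) * p 1 0 + (X1 1 1 - X1 0 1) * p 1 1 ∧
      0 ≤ (X2 0 0 - X2 0 1) * p 0 0 + (X2 1 0 - X2 1 1) * p 1 0 ∧
      0 ≤ (X2 0 1 - X2 0 0) * p 0 1 + (X2 1 1 - X2 1 0) * p 1 1 := by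
  constructor
  · rintro ⟨h0, h1, h2, h3⟩
    refine ⟨⟨h0 0 0, h0 0 1, h0 1 0, h0 1 1⟩, ?_, ?_, ?_, ?_, ?_⟩
    · have := h1; simp [Fin.sum_univ_two] at this; linarith
    · simpa [Fin.sum_univ_two] using h2 0 1
    · simpa [Fin.sum_univ_two] using h2 1 0
    · simpa [Fin.sum_univ_two] using h3 0 1
    · simpa [Fin.sum_univ_two] using h3 1 0
  · rintro ⟨⟨a, b, c, d⟩, hsum, c1, c2, c3, c4⟩
    refine ⟨?_, ?_, ?_, ?_⟩
    · intro j k; fin_cases j <;> fin_cases k <;> assumption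
    · simp [Fin.sum_univ_two]; linarith
    · intro k l; fin_cases k <;> fin_cases l <;> simp [Fin.sum_univ_two] <;> linarith
    · intro k l; fin_cases k <;> fin_cases l <;> simp [Fin.sum_univ_two] <;> linarith

noncomputable def lfun (c : Fin 2 → Fin 2 → ℝ) : (Fin 2 → Fin 2 → ℝ) →ₗ[ℝ] ℝ where
  toFun v := ∑ j, ∑ k, c j k * v j k
  map_add' x y := by simp [mul_add, Finset.sum_add_distrib]
  map_smul' r x := by
    simp [Finset.mul_sum, mul_left_comm, smul_eq_mul, Fin.sum_univ_two]; ring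

lemma lfun_apply (c v : Fin 2 → Fin 2 → ℝ) :
    lfun c v = c 0 0 * v 0 0 + c 0 1 * v 0 1 + c 1 0 * v 1 0 + c 1 1 * v 1 1 := by
  simp [lfun, Fin.sum_univ_two]; ring

lemma finrank_V : Module.finrank ℝ (Fin 2 → Fin 2 → ℝ) = 4 := by
  simp [Module.finrank_pi_fintype]

lemma vectorSpan_le_ker (f : (Fin 2 → Fin 2 → ℝ) →ₗ[ℝ] ℝ) (S : Set (Fin 2 → Fin 2 → ℝ))
    (c : ℝ) (hf : ∀ p ∈ S, f p = c) :
    vectorSpan ℝ S ≤ LinearMap.ker f := by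
  rw [vectorSpan_def]
  refine Submodule.span_le.2 ?_
  rintro v ⟨p, hp, q, hq, rfl⟩
  simp [LinearMap.mem_ker, vsub_eq_sub, map_sub, hf p hp, hf q hq]

lemma finrank_le_two (f g : (Fin 2 → Fin 2 → ℝ) →ₗ[ℝ] ℝ)
    (S : Set (Fin 2 → Fin 2 → ℝ)) (c d : ℝ)
    (hf : ∀ p ∈ S, f p = c) (hg : ∀ p ∈ S, g p = d)
    (u w : Fin 2 → Fin 2 → ℝ)
    (hu1 : f u = 1) (hu0 : g u = 0) (hw0 : f w = 0) (hw1 : g w = 1) :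
    Module.finrank ℝ (vectorSpan ℝ S) ≤ 2 := by
  have hle : vectorSpan ℝ S ≤ LinearMap.ker (f.prod g) := by
    rw [LinearMap.ker_prod]
    exact le_inf (vectorSpan_le_ker f S c hf) (vectorSpan_le_ker g S d hg)
  have hsurj : Function.Surjective (f.prod g) := by
    rintro ⟨a, b⟩
    exact ⟨a • u + b • w, by simp [LinearMap.prod_apply, hu1, hu0, hw0, hw1]⟩
  have hker : Module.finrank ℝ (LinearMap.ker (f.prod g)) = 2 := by
    have h := LinearMap.finrank_range_add_finrank_ker (f.prod g)
    rw [LinearMap.range_eq_top.2 hsurj] at h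
    simp [finrank_V] at h
    omega
  calc Module.finrank ℝ (vectorSpan ℝ S) ≤ Module.finrank ℝ (LinearMap.ker (f.prod g)) :=
        Submodule.finrank_mono hle
    _ = 2 := hker

lemma finrank_le_three (g : (Fin 2 → Fin 2 → ℝ) →ₗ[ℝ] ℝ)
    (S : Set (Fin 2 → Fin 2 → ℝ)) (d : ℝ)
    (hg : ∀ p ∈ S, g p = d) (u : Fin 2 → Fin 2 → ℝ) (hu : g u = 1) :
    Module.finrank ℝ (vectorSpan ℝ S) ≤ 3 := by
  have hsurj : Function.Surjective g := fun a => ⟨a • u, by simp [hu]⟩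
  have hker : Module.finrank ℝ (LinearMap.ker g) = 3 := by
    have h := LinearMap.finrank_range_add_finrank_ker g
    rw [LinearMap.range_eq_top.2 hsurj] at h
    simp [finrank_V] at h
    omega
  calc Module.finrank ℝ (vectorSpan ℝ S) ≤ Module.finrank ℝ (LinearMap.ker g) :=
        Submodule.finrank_mono (vectorSpan_le_ker g S d hg)
    _ = 3 := hker

lemma li3 (v0 v1 v2 : Fin 2 → Fin 2 → ℝ) (r1 r2 r3 : Fin 2 × Fin 2)
    (h01 : v0 r1.1 r1.2 = 0) (h21 : v2 r1.1 r1.2 = 0) (h11 : v1 r1.1 r1.2 ≠ 0)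
    (h02 : v0 r2.1 r2.2 = 0) (h22 : v2 r2.1 r2.2 ≠ 0)
    (h03 : v0 r3.1 r3.2 ≠ 0) :
    LinearIndependent ℝ ![v0, v1, v2] := by
  rw [Fintype.linearIndependent_iff]
  intro g hg
  have e : ∀ j k : Fin 2, g 0 * v0 j k + g 1 * v1 j k + g 2 * v2 j k = 0 := by
    intro j k
    have := congrFun (congrFun hg j) k
    simpa [Fin.sum_univ_three] using this
  have hg1 : g 1 = 0 := by
    have h := e r1.1 r1.2
    rw [h01, h21] at h
    have : g 1 * v1 r1.1 r1.2 = 0 := by linarith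
    exact (mul_eq_zero.1 this).resolve_right h11
  have hg2 : g 2 = 0 := by
    have h := e r2.1 r2.2
    rw [h02, hg1] at h
    have : g 2 * v2 r2.1 r2.2 = 0 := by linarith
    exact (mul_eq_zero.1 this).resolve_right h22
  have hg0 : g 0 = 0 := by
    have h := e r3.1 r3.2
    rw [hg1, hg2] at h
    have : g 0 * v0 r3.1 r3.2 = 0 := by linarith
    exact (mul_eq_zero.1 this).resolve_right h03
  intro i; fin_cases i <;> assumption

lemma finrank_ge_three (S : Set (Fin 2 → Fin 2 → ℝ)) (a b c d : Fin 2 → Fin 2 → ℝ)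
    (ha : a ∈ S) (hb : b ∈ S) (hc : c ∈ S) (hd : d ∈ S)
    (h : LinearIndependent ℝ ![b - a, c - a, d - a]) :
    3 ≤ Module.finrank ℝ (vectorSpan ℝ S) := by
  have hsub : Submodule.span ℝ (Set.range ![b - a, c - a, d - a]) ≤ vectorSpan ℝ S := by
    rw [Submodule.span_le]
    rintro v ⟨i, rfl⟩
    fin_cases i
    · simpa [vsub_eq_sub] using vsub_mem_vectorSpan ℝ hb ha
    · simpa [vsub_eq_sub] using vsub_mem_vectorSpan ℝ hc ha
    · simpa [vsub_eq_sub] using vsub_mem_vectorSpan ℝ hd ha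
  have hcard := finrank_span_eq_card h
  calc (3 : ℕ) = Module.finrank ℝ (Submodule.span ℝ (Set.range ![b - a, c - a, d - a])) := by
        rw [hcard]; simp
    _ ≤ Module.finrank ℝ (vectorSpan ℝ S) := Submodule.finrank_mono hsub

set_option maxHeartbeats 2000000 in
/-- For a generic `(2 × 2)`-game, the correlated equilibrium polytope has maximal
dimension `3` if and only if the payoff differences satisfy one of two sign patterns. -/
theorem maximal_dim_iff_sign_pattern_2x2
    (X1 X2 : Fin 2 → Fin 2 → ℝ)
    (Y₁ Y₂ Z₁ Z₂ : ℝ)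
    (hY₁ : Y₁ = X1 0 0 - X1 1 0) (hY₂ : Y₂ = X1 0 1 - X1 1 1)
    (hZ₁ : Z₁ = X2 0 0 - X2 0 1) (hZ₂ : Z₂ = X2 1 0 - X2 1 1)
    (hY₁0 : Y₁ ≠ 0) (hY₂0 : Y₂ ≠ 0) (hZ₁0 : Z₁ ≠ 0) (hZ₂0 : Z₂ ≠ 0) :
    Module.finrank ℝ (affineSpan ℝ (CorrelatedEqPolytope X1 X2)).direction = 3 ↔
      ((0 < Y₁ ∧ Y₂ < 0 ∧ 0 < Z₁ ∧ Z₂ < 0) ∨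
        (Y₁ < 0 ∧ 0 < Y₂ ∧ Z₁ < 0 ∧ 0 < Z₂)) := by
  rw [direction_affineSpan]
  set S := CorrelatedEqPolytope X1 X2 with hS
  have e1 : X1 0 0 - X1 1 0 = Y₁ := hY₁.symm
  have e2 : X1 1 0 - X1 0 0 = -Y₁ := by rw [hY₁]; ring
  have e3 : X1 0 1 - X1 1 1 = Y₂ := hY₂.symm
  have e4 : X1 1 1 - X1 0 1 = -Y₂ := by rw [hY₂]; ring
  have f1 : X2 0 0 - X2 0 1 = Z₁ := hZ₁.symm
  have f2 : X2 0 1 - X2 0 0 = -Z₁ := by rw [hZ₁]; ring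
  have f3 : X2 1 0 - X2 1 1 = Z₂ := hZ₂.symm
  have f4 : X2 1 1 - X2 1 0 = -Z₂ := by rw [hZ₂]; ring
  -- membership characterization in terms of Y, Z
  have key : ∀ p ∈ S, (0 ≤ p 0 0 ∧ 0 ≤ p 0 1 ∧ 0 ≤ p 1 0 ∧ 0 ≤ p 1 1) ∧
      p 0 0 + p 0 1 + p 1 0 + p 1 1 = 1 ∧
      0 ≤ Y₁ * p 0 0 + Y₂ * p 0 1 ∧ Y₁ * p 1 0 + Y₂ * p 1 1 ≤ 0 ∧
      0 ≤ Z₁ * p 0 0 + Z₂ * p 1 0 ∧ Z₁ * p 0 1 + Z₂ * p 1 1 ≤ 0 := by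
    intro p hp
    rw [hS, mem_CEP_iff, e1, e2, e3, e4, f1, f2, f3, f4] at hp
    obtain ⟨hn, hsum, c1, c2, c3, c4⟩ := hp
    exact ⟨hn, hsum, c1, by linarith, c3, by linarith⟩
  have memS : ∀ p : Fin 2 → Fin 2 → ℝ, (0 ≤ p 0 0 ∧ 0 ≤ p 0 1 ∧ 0 ≤ p 1 0 ∧ 0 ≤ p 1 1) →
      p 0 0 + p 0 1 + p 1 0 + p 1 1 = 1 →
      0 ≤ Y₁ * p 0 0 + Y₂ * p 0 1 → Y₁ * p 1 0 + Y₂ * p 1 1 ≤ 0 →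
      0 ≤ Z₁ * p 0 0 + Z₂ * p 1 0 → Z₁ * p 0 1 + Z₂ * p 1 1 ≤ 0 → p ∈ S := by
    intro p hn hsum c1 c2 c3 c4
    rw [hS, mem_CEP_iff, e1, e2, e3, e4, f1, f2, f3, f4]
    exact ⟨hn, hsum, c1, by linarith, c3, by linarith⟩
  -- the sum functional
  have hsumf : ∀ p ∈ S, lfun (fun _ _ => 1) p = 1 := by
    intro p hp
    rw [lfun_apply]
    have := (key p hp).2.1
    linarith
  constructor
  · -- forward direction
    intro hdim
    have HA : 0 < Y₁ → 0 < Y₂ → False := by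
      intro hy1 hy2
      have hconst : ∀ p ∈ S, lfun ![![0,0],![1,0]] p = 0 := by
        intro p hp
        obtain ⟨⟨n1, n2, n3, n4⟩, -, -, c2, -, -⟩ := key p hp
        rw [lfun_apply]
        have h1 : 0 ≤ Y₁ * p 1 0 := mul_nonneg hy1.le n3
        have h2 : 0 ≤ Y₂ * p 1 1 := mul_nonneg hy2.le n4
        have h3 : Y₁ * p 1 0 = 0 := by linarith
        have := (mul_eq_zero.1 h3).resolve_left hY₁0
        simp [this]
      have hle := finrank_le_two (lfun ![![0,0],![1,0]]) (lfun (fun _ _ => 1)) S 0 1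
        hconst hsumf ![![-1,0],![1,0]] ![![1,0],![0,0]]
        (by rw [lfun_apply]; norm_num) (by rw [lfun_apply]; norm_num)
        (by rw [lfun_apply]; norm_num) (by rw [lfun_apply]; norm_num)
      omega
    have HB : Y₁ < 0 → Y₂ < 0 → False := by
      intro hy1 hy2
      have hconst : ∀ p ∈ S, lfun ![![1,0],![0,0]] p = 0 := by
        intro p hp
        obtain ⟨⟨n1, n2, n3, n4⟩, -, c1, -, -, -⟩ := key p hp
        rw [lfun_apply]
        have h1 : Y₁ * p 0 0 ≤ 0 := mul_nonpos_of_nonpos_of_nonneg hy1.le n1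
        have h2 : Y₂ * p 0 1 ≤ 0 := mul_nonpos_of_nonpos_of_nonneg hy2.le n2
        have h3 : Y₁ * p 0 0 = 0 := by linarith
        have := (mul_eq_zero.1 h3).resolve_left hY₁0
        simp [this]
      have hle := finrank_le_two (lfun ![![1,0],![0,0]]) (lfun (fun _ _ => 1)) S 0 1
        hconst hsumf ![![1,0],![-1,0]] ![![0,0],![1,0]]
        (by rw [lfun_apply]; norm_num) (by rw [lfun_apply]; norm_num)
        (by rw [lfun_apply]; norm_num) (by rw [lfun_apply]; norm_num)
      omega
    have HC : 0 < Z₁ → 0 < Z₂ → False := by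
      intro hz1 hz2
      have hconst : ∀ p ∈ S, lfun ![![0,1],![0,0]] p = 0 := by
        intro p hp
        obtain ⟨⟨n1, n2, n3, n4⟩, -, -, -, -, c4⟩ := key p hp
        rw [lfun_apply]
        have h1 : 0 ≤ Z₁ * p 0 1 := mul_nonneg hz1.le n2
        have h2 : 0 ≤ Z₂ * p 1 1 := mul_nonneg hz2.le n4
        have h3 : Z₁ * p 0 1 = 0 := by linarith
        have := (mul_eq_zero.1 h3).resolve_left hZ₁0
        simp [this]
      have hle := finrank_le_two (lfun ![![0,1],![0,0]]) (lfun (fun _ _ => 1)) S 0 1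
        hconst hsumf ![![-1,1],![0,0]] ![![1,0],![0,0]]
        (by rw [lfun_apply]; norm_num) (by rw [lfun_apply]; norm_num)
        (by rw [lfun_apply]; norm_num) (by rw [lfun_apply]; norm_num)
      omega
    have HD : Z₁ < 0 → Z₂ < 0 → False := by
      intro hz1 hz2
      have hconst : ∀ p ∈ S, lfun ![![1,0],![0,0]] p = 0 := by
        intro p hp
        obtain ⟨⟨n1, n2, n3, n4⟩, -, -, -, c3, -⟩ := key p hp
        rw [lfun_apply]
        have h1 : Z₁ * p 0 0 ≤ 0 := mul_nonpos_of_nonpos_of_nonneg hz1.le n1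
        have h2 : Z₂ * p 1 0 ≤ 0 := mul_nonpos_of_nonpos_of_nonneg hz2.le n3
        have h3 : Z₁ * p 0 0 = 0 := by linarith
        have := (mul_eq_zero.1 h3).resolve_left hZ₁0
        simp [this]
      have hle := finrank_le_two (lfun ![![1,0],![0,0]]) (lfun (fun _ _ => 1)) S 0 1
        hconst hsumf ![![1,0],![-1,0]] ![![0,0],![1,0]]
        (by rw [lfun_apply]; norm_num) (by rw [lfun_apply]; norm_num)
        (by rw [lfun_apply]; norm_num) (by rw [lfun_apply]; norm_num)
      omega
    have HE : ((0 < Y₁ ∧ Y₂ < 0 ∧ Z₁ < 0 ∧ 0 < Z₂) ∨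
        (Y₁ < 0 ∧ 0 < Y₂ ∧ 0 < Z₁ ∧ Z₂ < 0)) → False := by
      intro hcase
      have hconst : ∀ p ∈ S, lfun ![![Y₁,Y₂],![0,0]] p = 0 := by
        intro p hp
        obtain ⟨⟨n1, n2, n3, n4⟩, -, c1, c2, c3, c4⟩ := key p hp
        rw [lfun_apply]
        rcases hcase with ⟨hy1, hy2, hz1, hz2⟩ | ⟨hy1, hy2, hz1, hz2⟩
        · have m1 : 0 ≤ Y₁ * (Z₁ * p 0 0 + Z₂ * p 1 0) := mul_nonneg hy1.le c3
          have m2 : 0 ≤ Z₂ * (-(Y₁ * p 1 0 + Y₂ * p 1 1)) :=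
            mul_nonneg hz2.le (by linarith)
          have m3 : 0 ≤ (-Y₂) * (-(Z₁ * p 0 1 + Z₂ * p 1 1)) :=
            mul_nonneg (by linarith) (by linarith)
          have hle : Y₁ * p 0 0 + Y₂ * p 0 1 ≤ 0 := by nlinarith [m1, m2, m3]
          have : Matrix.vecHead ![(0:ℝ), 0] = 0 := rfl
          simp [Matrix.cons_val_zero, Matrix.cons_val_one, Matrix.head_cons]
          linarith
        · have m1 : 0 ≤ (-Y₁) * (Z₁ * p 0 0 + Z₂ * p 1 0) :=
            mul_nonneg (by linarith) c3
          have m2 : 0 ≤ (-Z₂) * (-(Y₁ * p 1 0 + Y₂ * p 1 1)) :=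
            mul_nonneg (by linarith) (by linarith)
          have m3 : 0 ≤ Y₂ * (-(Z₁ * p 0 1 + Z₂ * p 1 1)) :=
            mul_nonneg hy2.le (by linarith)
          have hle : Y₁ * p 0 0 + Y₂ * p 0 1 ≤ 0 := by nlinarith [m1, m2, m3]
          simp [Matrix.cons_val_zero, Matrix.cons_val_one, Matrix.head_cons]
          linarith
      have hle := finrank_le_two (lfun ![![Y₁,Y₂],![0,0]]) (lfun (fun _ _ => 1)) S 0 1
        hconst hsumf ![![1/Y₁,0],![-(1/Y₁),0]] ![![0,0],![1,0]]
        (by rw [lfun_apply]; simp; field_simp) (by rw [lfun_apply]; norm_num)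
        (by rw [lfun_apply]; norm_num) (by rw [lfun_apply]; norm_num)
      omega
    rcases hY₁0.lt_or_gt with hy1 | hy1 <;> rcases hY₂0.lt_or_gt with hy2 | hy2 <;>
      rcases hZ₁0.lt_or_gt with hz1 | hz1 <;> rcases hZ₂0.lt_or_gt with hz2 | hz2 <;>
      first
        | exact Or.inl ⟨hy1, hy2, hz1, hz2⟩
        | exact Or.inr ⟨hy1, hy2, hz1, hz2⟩
        | exact (HA hy1 hy2).elim
        | exact (HB hy1 hy2).elim
        | exact (HC hz1 hz2).elim
        | exact (HD hz1 hz2).elim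
        | exact (HE (Or.inl ⟨hy1, hy2, hz1, hz2⟩)).elim
        | exact (HE (Or.inr ⟨hy1, hy2, hz1, hz2⟩)).elim
  · -- reverse direction
    have hle3 := finrank_le_three (lfun (fun _ _ => 1)) S 1 hsumf ![![1,0],![0,0]]
      (by rw [lfun_apply]; norm_num)
    rintro (⟨hy1, hy2, hz1, hz2⟩ | ⟨hy1, hy2, hz1, hz2⟩)
    · set t := min (Y₁ / (Y₁ - 2*Y₂)) (-Z₂ / (2*Z₁ - Z₂)) with ht
      set s := min (-Y₂ / (2*Y₁ - Y₂)) (Z₁ / (Z₁ - 2*Z₂)) with hs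
      have hd1 : 0 < Y₁ - 2*Y₂ := by linarith
      have hd2 : 0 < 2*Z₁ - Z₂ := by linarith
      have hd3 : 0 < 2*Y₁ - Y₂ := by linarith
      have hd4 : 0 < Z₁ - 2*Z₂ := by linarith
      have ht0 : 0 < t := lt_min (div_pos hy1 hd1) (div_pos (by linarith) hd2)
      have htA : t * (Y₁ - 2*Y₂) ≤ Y₁ := (le_div_iff₀ hd1).1 (min_le_left _ _)
      have htB : t * (2*Z₁ - Z₂) ≤ -Z₂ := (le_div_iff₀ hd2).1 (min_le_right _ _)
      have ht1 : t ≤ 1 :=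
        le_of_mul_le_mul_right (by linarith : t * (Y₁ - 2*Y₂) ≤ 1 * (Y₁ - 2*Y₂)) hd1
      have hs0 : 0 < s := lt_min (div_pos (by linarith) hd3) (div_pos hz1 hd4)
      have hsA : s * (2*Y₁ - Y₂) ≤ -Y₂ := (le_div_iff₀ hd3).1 (min_le_left _ _)
      have hsB : s * (Z₁ - 2*Z₂) ≤ Z₁ := (le_div_iff₀ hd4).1 (min_le_right _ _)
      have hs1 : s ≤ 1 :=
        le_of_mul_le_mul_right (by linarith : s * (2*Y₁ - Y₂) ≤ 1 * (2*Y₁ - Y₂)) hd3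
      have haS : ![![(1:ℝ)/2, 0], ![0, 1/2]] ∈ S := by
        apply memS <;>
          simp only [Matrix.cons_val_zero, Matrix.cons_val_one, Matrix.head_cons]
        · norm_num
        · norm_num
        · linarith
        · linarith
        · linarith
        · linarith
      have hbS : ![![(3:ℝ)/4, 0], ![0, 1/4]] ∈ S := by
        apply memS <;>
          simp only [Matrix.cons_val_zero, Matrix.cons_val_one, Matrix.head_cons]
        · norm_num
        · norm_num
        · linarith
        · linarith
        · linarith
        · linarith
      have hcS : ![![(1-t)/2, t], ![0, (1-t)/2]] ∈ S := by
        apply memS <;>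
          simp only [Matrix.cons_val_zero, Matrix.cons_val_one, Matrix.head_cons]
        · refine ⟨by linarith, by linarith, le_refl _, by linarith⟩
        · ring
        · linarith
        · nlinarith
        · nlinarith
        · linarith
      have hdS : ![![(1-s)/2, 0], ![s, (1-s)/2]] ∈ S := by
        apply memS <;>
          simp only [Matrix.cons_val_zero, Matrix.cons_val_one, Matrix.head_cons]
        · refine ⟨by linarith, le_refl _, by linarith, by linarith⟩
        · ring
        · nlinarith
        · linarith
        · linarith
        · nlinarith
      have hli : LinearIndependent ℝ
          ![![![(3:ℝ)/4, 0], ![0, 1/4]] - ![![(1:ℝ)/2, 0], ![0, 1/2]],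
            ![![(1-t)/2, t], ![0, (1-t)/2]] - ![![(1:ℝ)/2, 0], ![0, 1/2]],
            ![![(1-s)/2, 0], ![s, (1-s)/2]] - ![![(1:ℝ)/2, 0], ![0, 1/2]]] := by
        apply li3 _ _ _ (0,1) (1,0) (0,0) <;>
          simp only [Pi.sub_apply, Matrix.cons_val_zero, Matrix.cons_val_one, Matrix.head_cons]
        · norm_num
        · norm_num
        · simpa using ht0.ne'
        · norm_num
        · simpa using hs0.ne'
        · norm_num
      have hge := finrank_ge_three S _ _ _ _ haS hbS hcS hdS hli
      omega
    · set t := min (Y₂ / (Y₂ - 2*Y₁)) (Z₂ / (Z₂ - 2*Z₁)) with ht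
      set s := min (-Y₁ / (2*Y₂ - Y₁)) (-Z₁ / (2*Z₂ - Z₁)) with hs
      have hd1 : 0 < Y₂ - 2*Y₁ := by linarith
      have hd2 : 0 < Z₂ - 2*Z₁ := by linarith
      have hd3 : 0 < 2*Y₂ - Y₁ := by linarith
      have hd4 : 0 < 2*Z₂ - Z₁ := by linarith
      have ht0 : 0 < t := lt_min (div_pos hy2 hd1) (div_pos hz2 hd2)
      have htA : t * (Y₂ - 2*Y₁) ≤ Y₂ := (le_div_iff₀ hd1).1 (min_le_left _ _)
      have htB : t * (Z₂ - 2*Z₁) ≤ Z₂ := (le_div_iff₀ hd2).1 (min_le_right _ _)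
      have ht1 : t ≤ 1 :=
        le_of_mul_le_mul_right (by linarith : t * (Y₂ - 2*Y₁) ≤ 1 * (Y₂ - 2*Y₁)) hd1
      have hs0 : 0 < s := lt_min (div_pos (by linarith) hd3) (div_pos (by linarith) hd4)
      have hsA : s * (2*Y₂ - Y₁) ≤ -Y₁ := (le_div_iff₀ hd3).1 (min_le_left _ _)
      have hsB : s * (2*Z₂ - Z₁) ≤ -Z₁ := (le_div_iff₀ hd4).1 (min_le_right _ _)
      have hs1 : s ≤ 1 :=
        le_of_mul_le_mul_right (by linarith : s * (2*Y₂ - Y₁) ≤ 1 * (2*Y₂ - Y₁)) hd3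
      have haS : ![![(0:ℝ), 1/2], ![1/2, 0]] ∈ S := by
        apply memS <;>
          simp only [Matrix.cons_val_zero, Matrix.cons_val_one, Matrix.head_cons]
        · norm_num
        · norm_num
        · linarith
        · linarith
        · linarith
        · linarith
      have hbS : ![![(0:ℝ), 3/4], ![1/4, 0]] ∈ S := by
        apply memS <;>
          simp only [Matrix.cons_val_zero, Matrix.cons_val_one, Matrix.head_cons]
        · norm_num
        · norm_num
        · linarith
        · linarith
        · linarith
        · linarith
      have hcS : ![![t, (1-t)/2], ![(1-t)/2, 0]] ∈ S := by
        apply memS <;>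
          simp only [Matrix.cons_val_zero, Matrix.cons_val_one, Matrix.head_cons]
        · refine ⟨by linarith, by linarith, by linarith, le_refl _⟩
        · ring
        · linarith
        · nlinarith
        · linarith
        · nlinarith
      have hdS : ![![(0:ℝ), (1-s)/2], ![(1-s)/2, s]] ∈ S := by
        apply memS <;>
          simp only [Matrix.cons_val_zero, Matrix.cons_val_one, Matrix.head_cons]
        · refine ⟨le_refl _, by linarith, by linarith, by linarith⟩
        · ring
        · nlinarith
        · linarith
        · nlinarith
        · linarith
      have hli : LinearIndependent ℝ
          ![![![(0:ℝ), 3/4], ![1/4, 0]] - ![![(0:ℝ), 1/2], ![1/2, 0]],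
            ![![t, (1-t)/2], ![(1-t)/2, 0]] - ![![(0:ℝ), 1/2], ![1/2, 0]],
            ![![(0:ℝ), (1-s)/2], ![(1-s)/2, s]] - ![![(0:ℝ), 1/2], ![1/2, 0]]] := by
        apply li3 _ _ _ (0,0) (1,1) (0,1) <;>
          simp only [Pi.sub_apply, Matrix.cons_val_zero, Matrix.cons_val_one, Matrix.head_cons]
        · norm_num
        · norm_num
        · simpa using ht0.ne'
        · norm_num
        · simpa using hs0.ne'
        · norm_num
      have hge := finrank_ge_three S _ _ _ _ haS hbS hcS hdS hli
      omega
end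

section
/- Consider the Traffic Lights (2 × 2)-game with payoff matrices X¹ = [[−99, 1], [0, 0]] and X² = [[−99, 0], [1, 0]] (rows indexed by player 1's strategies, columns by player 2's). Writing points as p = (p₁₁, p₁₂, p₂₁, p₂₂), the set of extreme points of the correlated equilibrium polytope P_G is exactly { (0, 0, 1, 0), (0, 1, 0, 0), (1/10000, 99/10000, 99/10000, 9801/10000), (0, 1/101, 1/101, 99/101), (1/199, 99/199, 99/199, 0) }. -/
abbrev TLP : Set (Fin 2 → Fin 2 → ℝ) :=
  CorrelatedEqPolytope ![![-99, 1], ![0, 0]] ![![-99, 0], ![1, 0]]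

noncomputable abbrev tv1 : Fin 2 → Fin 2 → ℝ := ![![0, 0], ![1, 0]]
noncomputable abbrev tv2 : Fin 2 → Fin 2 → ℝ := ![![0, 1], ![0, 0]]
noncomputable abbrev tv3 : Fin 2 → Fin 2 → ℝ := ![![1/10000, 99/10000], ![99/10000, 9801/10000]]
noncomputable abbrev tv4 : Fin 2 → Fin 2 → ℝ := ![![0, 1/101], ![1/101, 99/101]]
noncomputable abbrev tv5 : Fin 2 → Fin 2 → ℝ := ![![1/199, 99/199], ![99/199, 0]]

noncomputable abbrev TLV : Set (Fin 2 → Fin 2 → ℝ) := {tv1, tv2, tv3, tv4, tv5}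

lemma mem_P_iff (p : Fin 2 → Fin 2 → ℝ) :
    p ∈ TLP ↔
      0 ≤ p 0 0 ∧ 0 ≤ p 0 1 ∧ 0 ≤ p 1 0 ∧ 0 ≤ p 1 1 ∧
      p 0 0 + p 0 1 + p 1 0 + p 1 1 = 1 ∧
      99 * p 0 0 ≤ p 0 1 ∧ p 1 1 ≤ 99 * p 1 0 ∧
      99 * p 0 0 ≤ p 1 0 ∧ p 1 1 ≤ 99 * p 0 1 := by
  constructor
  · rintro ⟨h0, h1, h2, h3⟩
    have e1 := h2 0 1
    have e2 := h2 1 0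
    have e3 := h3 0 1
    have e4 := h3 1 0
    simp [Fin.sum_univ_two, Matrix.cons_val_zero, Matrix.cons_val_one, Matrix.head_cons]
      at e1 e2 e3 e4 h1
    exact ⟨h0 0 0, h0 0 1, h0 1 0, h0 1 1, by linarith, by linarith, by linarith,
      by linarith, by linarith⟩
  · rintro ⟨a0, a1, a2, a3, hs, i1, i2, i3, i4⟩
    refine ⟨?_, ?_, ?_, ?_⟩
    · intro j k; fin_cases j <;> fin_cases k <;> assumption
    · simp [Fin.sum_univ_two]; linarith
    · intro k l; fin_cases k <;> fin_cases l <;>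
        simp [Fin.sum_univ_two, Matrix.cons_val_zero, Matrix.cons_val_one, Matrix.head_cons] <;>
        linarith
    · intro k l; fin_cases k <;> fin_cases l <;>
        simp [Fin.sum_univ_two, Matrix.cons_val_zero, Matrix.cons_val_one, Matrix.head_cons] <;>
        linarith

lemma convex_TLP : Convex ℝ TLP := by
  intro p hp q hq a b ha hb hab
  rw [mem_P_iff] at hp hq ⊢
  obtain ⟨p0, p1, p2, p3, ps, pi1, pi2, pi3, pi4⟩ := hp
  obtain ⟨q0, q1, q2, q3, qs, qi1, qi2, qi3, qi4⟩ := hq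
  simp only [Pi.add_apply, Pi.smul_apply, smul_eq_mul]
  refine ⟨by positivity, by positivity, by positivity, by positivity, by nlinarith, ?_, ?_, ?_, ?_⟩ <;>
    nlinarith [mul_le_mul_of_nonneg_left pi1 ha, mul_le_mul_of_nonneg_left qi1 hb,
      mul_le_mul_of_nonneg_left pi2 ha, mul_le_mul_of_nonneg_left qi2 hb,
      mul_le_mul_of_nonneg_left pi3 ha, mul_le_mul_of_nonneg_left qi3 hb,
      mul_le_mul_of_nonneg_left pi4 ha, mul_le_mul_of_nonneg_left qi4 hb]

lemma tv1_mem : tv1 ∈ TLP := by rw [mem_P_iff]; norm_num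
lemma tv2_mem : tv2 ∈ TLP := by rw [mem_P_iff]; norm_num
lemma tv3_mem : tv3 ∈ TLP := by rw [mem_P_iff]; norm_num
lemma tv4_mem : tv4 ∈ TLP := by rw [mem_P_iff]; norm_num
lemma tv5_mem : tv5 ∈ TLP := by rw [mem_P_iff]; norm_num

lemma combo_mem {p : Fin 2 → Fin 2 → ℝ} (w : Fin 5 → ℝ) (hw : ∀ i, 0 ≤ w i)
    (h1 : w 0 + w 1 + w 2 + w 3 + w 4 = 1)
    (hp : p = w 0 • tv1 + w 1 • tv2 + w 2 • tv3 + w 3 • tv4 + w 4 • tv5) :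
    p ∈ convexHull ℝ TLV := by
  have := Convex.sum_mem (convex_convexHull ℝ TLV) (t := Finset.univ) (w := w)
    (z := ![tv1, tv2, tv3, tv4, tv5]) (fun i _ => hw i)
    (by simpa [Fin.sum_univ_five] using h1)
    (fun i _ => by
      fin_cases i <;> simp <;> apply subset_convexHull <;> simp [TLV])
  simpa [Fin.sum_univ_five, hp] using this

lemma TLP_subset_hull : TLP ⊆ convexHull ℝ TLV := by
  intro p hp
  rw [mem_P_iff] at hp
  obtain ⟨a0, a1, a2, a3, hs, i1, i2, i3, i4⟩ := hp
  set a := p 0 0 with ha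
  set b := p 0 1 with hb
  set c := p 1 0 with hc
  set d := p 1 1 with hd
  rcases le_or_gt (99 * a + d / 99) (min b c) with hcase | hcase
  · rw [le_min_iff] at hcase
    obtain ⟨hcb, hcc⟩ := hcase
    refine combo_mem ![c - d/99 - 99*a, b - d/99 - 99*a, 0, 101*d/99, 199*a] ?_ ?_ ?_
    · intro i; fin_cases i <;> simp <;> linarith
    · simp; linarith
    · funext j k
      fin_cases j <;> fin_cases k <;>
        simp [Pi.add_apply, Pi.smul_apply, smul_eq_mul] <;> ring_nf <;> linarith
  · rcases le_total b c with hbc | hbc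
    · rw [min_eq_left hbc] at hcase
      refine combo_mem
        ![c - b, 0, (10000/99) * (99*a + d/99 - b), 101*(b - 99*a), (199/99)*(b - d/99)] ?_ ?_ ?_
      · intro i; fin_cases i <;> simp <;> linarith
      · simp; linarith
      · funext j k
        fin_cases j <;> fin_cases k <;>
          simp [Pi.add_apply, Pi.smul_apply, smul_eq_mul] <;> ring_nf <;> linarith
    · rw [min_eq_right hbc] at hcase
      refine combo_mem
        ![0, b - c, (10000/99) * (99*a + d/99 - c), 101*(c - 99*a), (199/99)*(c - d/99)] ?_ ?_ ?_
      · intro i; fin_cases i <;> simp <;> linarith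
      · simp; linarith
      · funext j k
        fin_cases j <;> fin_cases k <;>
          simp [Pi.add_apply, Pi.smul_apply, smul_eq_mul] <;> ring_nf <;> linarith

lemma zero_both {t s A B : ℝ} (ht : 0 < t) (hs : 0 < s) (hA : 0 ≤ A) (hB : 0 ≤ B)
    (h : t * A + s * B = 0) : A = 0 ∧ B = 0 := by constructor <;> nlinarith

lemma tv1_extreme : tv1 ∈ Set.extremePoints ℝ TLP := by
  rw [mem_extremePoints]
  refine ⟨tv1_mem, fun y hy z hz hseg => ?_⟩
  obtain ⟨t, s, ht, hs, hts, hsum⟩ := hseg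
  rw [mem_P_iff] at hy hz
  obtain ⟨y0, y1, y2, y3, ys, yi1, yi2, yi3, yi4⟩ := hy
  obtain ⟨z0, z1, z2, z3, zs, zi1, zi2, zi3, zi4⟩ := hz
  have E00 : t * y 0 0 + s * z 0 0 = 0 := by
    have := congrFun (congrFun hsum 0) 0; simpa using this
  have E01 : t * y 0 1 + s * z 0 1 = 0 := by
    have := congrFun (congrFun hsum 0) 1; simpa using this
  have E11 : t * y 1 1 + s * z 1 1 = 0 := by
    have := congrFun (congrFun hsum 1) 1; simpa using this
  obtain ⟨f1y, f1z⟩ := zero_both ht hs y0 z0 E00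
  obtain ⟨f2y, f2z⟩ := zero_both ht hs y1 z1 E01
  obtain ⟨f3y, f3z⟩ := zero_both ht hs y3 z3 E11
  constructor <;> (funext j k; fin_cases j <;> fin_cases k <;> simp <;> linarith)

lemma tv2_extreme : tv2 ∈ Set.extremePoints ℝ TLP := by
  rw [mem_extremePoints]
  refine ⟨tv2_mem, fun y hy z hz hseg => ?_⟩
  obtain ⟨t, s, ht, hs, hts, hsum⟩ := hseg
  rw [mem_P_iff] at hy hz
  obtain ⟨y0, y1, y2, y3, ys, yi1, yi2, yi3, yi4⟩ := hy
  obtain ⟨z0, z1, z2, z3, zs, zi1, zi2, zi3, zi4⟩ := hz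
  have E00 : t * y 0 0 + s * z 0 0 = 0 := by
    have := congrFun (congrFun hsum 0) 0; simpa using this
  have E10 : t * y 1 0 + s * z 1 0 = 0 := by
    have := congrFun (congrFun hsum 1) 0; simpa using this
  have E11 : t * y 1 1 + s * z 1 1 = 0 := by
    have := congrFun (congrFun hsum 1) 1; simpa using this
  obtain ⟨f1y, f1z⟩ := zero_both ht hs y0 z0 E00
  obtain ⟨f2y, f2z⟩ := zero_both ht hs y2 z2 E10
  obtain ⟨f3y, f3z⟩ := zero_both ht hs y3 z3 E11
  constructor <;> (funext j k; fin_cases j <;> fin_cases k <;> simp <;> linarith)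

lemma tv3_extreme : tv3 ∈ Set.extremePoints ℝ TLP := by
  rw [mem_extremePoints]
  refine ⟨tv3_mem, fun y hy z hz hseg => ?_⟩
  obtain ⟨t, s, ht, hs, hts, hsum⟩ := hseg
  rw [mem_P_iff] at hy hz
  obtain ⟨y0, y1, y2, y3, ys, yi1, yi2, yi3, yi4⟩ := hy
  obtain ⟨z0, z1, z2, z3, zs, zi1, zi2, zi3, zi4⟩ := hz
  have E00 : t * y 0 0 + s * z 0 0 = 1/10000 := by
    have := congrFun (congrFun hsum 0) 0; simpa using this
  have E01 : t * y 0 1 + s * z 0 1 = 99/10000 := by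
    have := congrFun (congrFun hsum 0) 1; simpa using this
  have E10 : t * y 1 0 + s * z 1 0 = 99/10000 := by
    have := congrFun (congrFun hsum 1) 0; simpa using this
  have E11 : t * y 1 1 + s * z 1 1 = 9801/10000 := by
    have := congrFun (congrFun hsum 1) 1; simpa using this
  have h1 : t * (y 0 1 - 99 * y 0 0) + s * (z 0 1 - 99 * z 0 0) = 0 := by
    linear_combination E01 - 99 * E00
  have h2 : t * (y 1 0 - 99 * y 0 0) + s * (z 1 0 - 99 * z 0 0) = 0 := by
    linear_combination E10 - 99 * E00
  have h3 : t * (99 * y 1 0 - y 1 1) + s * (99 * z 1 0 - z 1 1) = 0 := by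
    linear_combination 99 * E10 - E11
  obtain ⟨f1y, f1z⟩ := zero_both ht hs (by linarith) (by linarith) h1
  obtain ⟨f2y, f2z⟩ := zero_both ht hs (by linarith) (by linarith) h2
  obtain ⟨f3y, f3z⟩ := zero_both ht hs (by linarith) (by linarith) h3
  constructor <;> (funext j k; fin_cases j <;> fin_cases k <;> simp <;> linarith)

lemma tv4_extreme : tv4 ∈ Set.extremePoints ℝ TLP := by
  rw [mem_extremePoints]
  refine ⟨tv4_mem, fun y hy z hz hseg => ?_⟩
  obtain ⟨t, s, ht, hs, hts, hsum⟩ := hseg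
  rw [mem_P_iff] at hy hz
  obtain ⟨y0, y1, y2, y3, ys, yi1, yi2, yi3, yi4⟩ := hy
  obtain ⟨z0, z1, z2, z3, zs, zi1, zi2, zi3, zi4⟩ := hz
  have E00 : t * y 0 0 + s * z 0 0 = 0 := by
    have := congrFun (congrFun hsum 0) 0; simpa using this
  have E01 : t * y 0 1 + s * z 0 1 = 1/101 := by
    have := congrFun (congrFun hsum 0) 1; simpa using this
  have E10 : t * y 1 0 + s * z 1 0 = 1/101 := by
    have := congrFun (congrFun hsum 1) 0; simpa using this
  have E11 : t * y 1 1 + s * z 1 1 = 99/101 := by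
    have := congrFun (congrFun hsum 1) 1; simpa using this
  have h2 : t * (99 * y 1 0 - y 1 1) + s * (99 * z 1 0 - z 1 1) = 0 := by
    linear_combination 99 * E10 - E11
  have h3 : t * (99 * y 0 1 - y 1 1) + s * (99 * z 0 1 - z 1 1) = 0 := by
    linear_combination 99 * E01 - E11
  obtain ⟨f1y, f1z⟩ := zero_both ht hs y0 z0 E00
  obtain ⟨f2y, f2z⟩ := zero_both ht hs (by linarith) (by linarith) h2
  obtain ⟨f3y, f3z⟩ := zero_both ht hs (by linarith) (by linarith) h3
  constructor <;> (funext j k; fin_cases j <;> fin_cases k <;> simp <;> linarith)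

lemma tv5_extreme : tv5 ∈ Set.extremePoints ℝ TLP := by
  rw [mem_extremePoints]
  refine ⟨tv5_mem, fun y hy z hz hseg => ?_⟩
  obtain ⟨t, s, ht, hs, hts, hsum⟩ := hseg
  rw [mem_P_iff] at hy hz
  obtain ⟨y0, y1, y2, y3, ys, yi1, yi2, yi3, yi4⟩ := hy
  obtain ⟨z0, z1, z2, z3, zs, zi1, zi2, zi3, zi4⟩ := hz
  have E00 : t * y 0 0 + s * z 0 0 = 1/199 := by
    have := congrFun (congrFun hsum 0) 0; simpa using this
  have E01 : t * y 0 1 + s * z 0 1 = 99/199 := by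
    have := congrFun (congrFun hsum 0) 1; simpa using this
  have E10 : t * y 1 0 + s * z 1 0 = 99/199 := by
    have := congrFun (congrFun hsum 1) 0; simpa using this
  have E11 : t * y 1 1 + s * z 1 1 = 0 := by
    have := congrFun (congrFun hsum 1) 1; simpa using this
  have h2 : t * (y 0 1 - 99 * y 0 0) + s * (z 0 1 - 99 * z 0 0) = 0 := by
    linear_combination E01 - 99 * E00
  have h3 : t * (y 1 0 - 99 * y 0 0) + s * (z 1 0 - 99 * z 0 0) = 0 := by
    linear_combination E10 - 99 * E00
  obtain ⟨f1y, f1z⟩ := zero_both ht hs y3 z3 E11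
  obtain ⟨f2y, f2z⟩ := zero_both ht hs (by linarith) (by linarith) h2
  obtain ⟨f3y, f3z⟩ := zero_both ht hs (by linarith) (by linarith) h3
  constructor <;> (funext j k; fin_cases j <;> fin_cases k <;> simp <;> linarith)

/-- The correlated equilibrium polytope of the Traffic Lights game has exactly the five
listed vertices. -/
theorem trafficLights_extremePoints :
    Set.extremePoints ℝ
        (CorrelatedEqPolytope ![![-99, 1], ![0, 0]] ![![-99, 0], ![1, 0]]) =
      {![![(0 : ℝ), 0], ![1, 0]],
        ![![(0 : ℝ), 1], ![0, 0]],
        ![![(1/10000 : ℝ), 99/10000], ![99/10000, 9801/10000]],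
        ![![(0 : ℝ), 1/101], ![1/101, 99/101]],
        ![![(1/199 : ℝ), 99/199], ![99/199, 0]]} := by
  have hVsub : TLV ⊆ TLP := by
    intro x hx
    simp only [TLV, Set.mem_insert_iff, Set.mem_singleton_iff] at hx
    rcases hx with rfl | rfl | rfl | rfl | rfl
    exacts [tv1_mem, tv2_mem, tv3_mem, tv4_mem, tv5_mem]
  have hhull : TLP = convexHull ℝ TLV :=
    le_antisymm TLP_subset_hull (convexHull_min hVsub convex_TLP)
  show Set.extremePoints ℝ TLP = TLV
  apply Set.Subset.antisymm
  · rw [hhull]; exact extremePoints_convexHull_subset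
  · intro x hx
    simp only [TLV, Set.mem_insert_iff, Set.mem_singleton_iff] at hx
    rcases hx with rfl | rfl | rfl | rfl | rfl
    exacts [tv1_extreme, tv2_extreme, tv3_extreme, tv4_extreme, tv5_extreme]
end

section
/- Consider the Traffic Lights (2 × 2)-game with payoff matrices X¹ = [[−99, 1], [0, 0]] and X² = [[−99, 0], [1, 0]]. Writing points as p = (p₁₁, p₁₂, p₂₁, p₂₂), a point p of the correlated equilibrium polytope P_G is a Nash equilibrium (i.e. there exist a, b : Fin 2 → ℝ with a, b ≥ 0, ∑ a = ∑ b = 1, and p i j = a i · b j for all i, j) if and only if p ∈ { (0, 1, 0, 0), (0, 0, 1, 0), (1/10000, 99/10000, 99/10000, 9801/10000) }. -/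
set_option maxHeartbeats 1000000


/-- In the Traffic Lights game, the Nash equilibria (rank-one points of the correlated
equilibrium polytope) are exactly the three listed points. -/
theorem trafficLights_nashEquilibria (p : Fin 2 → Fin 2 → ℝ) :
    (p ∈ CorrelatedEqPolytope ![![-99, 1], ![0, 0]] ![![-99, 0], ![1, 0]] ∧
      ∃ a b : Fin 2 → ℝ, (∀ i, 0 ≤ a i) ∧ (∀ j, 0 ≤ b j) ∧
        (∑ i, a i = 1) ∧ (∑ j, b j = 1) ∧ ∀ i j, p i j = a i * b j) ↔
      p ∈ ({![![(0 : ℝ), 1], ![0, 0]],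
            ![![(0 : ℝ), 0], ![1, 0]],
            ![![(1/10000 : ℝ), 99/10000], ![99/10000, 9801/10000]]} :
        Set (Fin 2 → Fin 2 → ℝ)) := by
  constructor
  · rintro ⟨⟨hpos, hsum, h1, h2⟩, a, b, ha, hb, hsa, hsb, hp⟩
    have e1 := h1 0 1
    have e2 := h1 1 0
    have e3 := h2 0 1
    have e4 := h2 1 0
    simp only [Fin.sum_univ_two, hp, Matrix.cons_val_zero, Matrix.cons_val_one,
      Matrix.head_cons] at e1 e2 e3 e4 hsa hsb
    have ha0 := ha 0
    have ha1 := ha 1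
    have hb0 := hb 0
    have hb1 := hb 1
    simp only [Set.mem_insert_iff, Set.mem_singleton_iff]
    rcases eq_or_lt_of_le ha0 with h | h
    · -- a 0 = 0
      have A0 : a 0 = 0 := h.symm
      have B1 : b 1 = 0 := by nlinarith
      have A1 : a 1 = 1 := by linarith
      have B0 : b 0 = 1 := by linarith
      right; left
      funext i j
      fin_cases i <;> fin_cases j <;> simp [hp, A0, A1, B0, B1]
    · rcases eq_or_lt_of_le hb0 with h' | h'
      · -- b 0 = 0
        have B0 : b 0 = 0 := h'.symm
        have A1 : a 1 = 0 := by nlinarith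
        have A0 : a 0 = 1 := by linarith
        have B1 : b 1 = 1 := by linarith
        left
        funext i j
        fin_cases i <;> fin_cases j <;> simp [hp, A0, A1, B0, B1]
      · -- both positive
        have hA1 : 99 * a 0 ≤ a 1 := by nlinarith
        have hA1pos : 0 < a 1 := by linarith
        have hbq : b 1 = 99 * b 0 := by nlinarith
        have hB1pos : 0 < b 1 := by nlinarith
        have haq : a 1 = 99 * a 0 := by nlinarith
        have A0 : a 0 = 1 / 100 := by nlinarith
        have B0 : b 0 = 1 / 100 := by nlinarith
        have A1 : a 1 = 99 / 100 := by linarith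
        have B1 : b 1 = 99 / 100 := by linarith
        right; right
        funext i j
        fin_cases i <;> fin_cases j <;> norm_num [hp, A0, A1, B0, B1]
  · intro hmem
    simp only [Set.mem_insert_iff, Set.mem_singleton_iff] at hmem
    rcases hmem with h | h | h <;> subst h <;>
    refine ⟨⟨?_, ?_, ?_, ?_⟩, ?_⟩
    · intro j k; fin_cases j <;> fin_cases k <;> norm_num
    · simp [Fin.sum_univ_two]
    · intro k l; fin_cases k <;> fin_cases l <;> norm_num [Fin.sum_univ_two]
    · intro k l; fin_cases k <;> fin_cases l <;> norm_num [Fin.sum_univ_two]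
    · exact ⟨![1, 0], ![0, 1], by intro i; fin_cases i <;> norm_num,
        by intro j; fin_cases j <;> norm_num, by norm_num [Fin.sum_univ_two],
        by norm_num [Fin.sum_univ_two], by intro i j; fin_cases i <;> fin_cases j <;> norm_num⟩
    · intro j k; fin_cases j <;> fin_cases k <;> norm_num
    · simp [Fin.sum_univ_two]
    · intro k l; fin_cases k <;> fin_cases l <;> norm_num [Fin.sum_univ_two]
    · intro k l; fin_cases k <;> fin_cases l <;> norm_num [Fin.sum_univ_two]
    · exact ⟨![0, 1], ![1, 0], by intro i; fin_cases i <;> norm_num,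
        by intro j; fin_cases j <;> norm_num, by norm_num [Fin.sum_univ_two],
        by norm_num [Fin.sum_univ_two], by intro i j; fin_cases i <;> fin_cases j <;> norm_num⟩
    · intro j k; fin_cases j <;> fin_cases k <;> norm_num
    · simp [Fin.sum_univ_two]; norm_num
    · intro k l; fin_cases k <;> fin_cases l <;> norm_num [Fin.sum_univ_two]
    · intro k l; fin_cases k <;> fin_cases l <;> norm_num [Fin.sum_univ_two]
    · exact ⟨![1/100, 99/100], ![1/100, 99/100], by intro i; fin_cases i <;> norm_num,
        by intro j; fin_cases j <;> norm_num, by norm_num [Fin.sum_univ_two],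
        by norm_num [Fin.sum_univ_two], by intro i j; fin_cases i <;> fin_cases j <;> norm_num⟩
end

section
/- Consider the Hawk–Dove (2 × 2)-game with parameters V, C ∈ ℝ satisfying C > V > 0, with payoff matrices X¹ = [[(V−C)/2, V], [0, V/2]] and X² = [[(V−C)/2, 0], [V, V/2]]. Then the correlated equilibrium polytope P_G has maximal dimension 3 (the dimension of the direction of its affine span equals 3) and has exactly 5 extreme points. -/
set_option maxHeartbeats 1000000

noncomputable def hdP (V C : ℝ) : Set (Fin 2 → Fin 2 → ℝ) :=
  CorrelatedEqPolytope ![![(V - C)/2, V], ![0, V/2]] ![![(V - C)/2, 0], ![V, V/2]]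

noncomputable def hdv (V C : ℝ) : Fin 5 → Fin 2 → Fin 2 → ℝ :=
  ![![![0, 1], ![0, 0]],
    ![![0, 0], ![1, 0]],
    ![![V/(2*C-V), (C-V)/(2*C-V)], ![(C-V)/(2*C-V), 0]],
    ![![0, V/(C+V)], ![V/(C+V), (C-V)/(C+V)]],
    ![![(V/C)^2, V*(C-V)/C^2], ![V*(C-V)/C^2, ((C-V)/C)^2]]]

lemma hd_mem_iff (V C : ℝ) (p : Fin 2 → Fin 2 → ℝ) :
    p ∈ hdP V C ↔
      0 ≤ p 0 0 ∧ 0 ≤ p 0 1 ∧ 0 ≤ p 1 0 ∧ 0 ≤ p 1 1 ∧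
      p 0 0 + p 0 1 + p 1 0 + p 1 1 = 1 ∧
      (C - V) * p 0 0 ≤ V * p 0 1 ∧ V * p 1 1 ≤ (C - V) * p 1 0 ∧
      (C - V) * p 0 0 ≤ V * p 1 0 ∧ V * p 1 1 ≤ (C - V) * p 0 1 := by
  constructor
  · rintro ⟨h0, h1, h2, h3⟩
    have e1 := h2 0 1
    have e2 := h2 1 0
    have e3 := h3 0 1
    have e4 := h3 1 0
    simp [Fin.sum_univ_two, Matrix.cons_val_zero, Matrix.cons_val_one] at e1 e2 e3 e4 h1
    exact ⟨h0 0 0, h0 0 1, h0 1 0, h0 1 1, by linarith, by linarith, by linarith,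
      by linarith, by linarith⟩
  · rintro ⟨h00, h01, h10, h11, hs, c1, c2, c3, c4⟩
    refine ⟨?_, ?_, ?_, ?_⟩
    · intro j k; fin_cases j <;> fin_cases k <;> assumption
    · simp [Fin.sum_univ_two]; linarith
    · intro k l; fin_cases k <;> fin_cases l <;>
        simp [Fin.sum_univ_two] <;> linarith
    · intro k l; fin_cases k <;> fin_cases l <;>
        simp [Fin.sum_univ_two] <;> linarith

lemma hdv_mem (V C : ℝ) (hV : 0 < V) (hC : V < C) (i : Fin 5) :
    hdv V C i ∈ hdP V C := by
  have h1 : (0:ℝ) < 2*C - V := by linarith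
  have h2 : (0:ℝ) < C + V := by linarith
  have h3 : (0:ℝ) < C := by linarith
  have h4 : (0:ℝ) < C - V := by linarith
  rw [hd_mem_iff]
  fin_cases i <;> simp [hdv] <;>
    (repeat' apply And.intro) <;>
    first
      | positivity
      | linarith
      | (exact le_of_eq (by ring))
      | (field_simp [h1.ne', h2.ne', h3.ne']; ring)

lemma hdP_convex (V C : ℝ) : Convex ℝ (hdP V C) := by
  intro x hx y hy a b ha hb hab
  rw [hd_mem_iff] at hx hy ⊢
  obtain ⟨x0, x1, x2, x3, xs, xc1, xc2, xc3, xc4⟩ := hx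
  obtain ⟨y0, y1, y2, y3, ys, yc1, yc2, yc3, yc4⟩ := hy
  simp only [Pi.add_apply, Pi.smul_apply, smul_eq_mul]
  refine ⟨add_nonneg (mul_nonneg ha x0) (mul_nonneg hb y0),
    add_nonneg (mul_nonneg ha x1) (mul_nonneg hb y1),
    add_nonneg (mul_nonneg ha x2) (mul_nonneg hb y2),
    add_nonneg (mul_nonneg ha x3) (mul_nonneg hb y3),
    by linear_combination a * xs + b * ys + hab, ?_, ?_, ?_, ?_⟩
  · nlinarith [mul_le_mul_of_nonneg_left xc1 ha, mul_le_mul_of_nonneg_left yc1 hb]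
  · nlinarith [mul_le_mul_of_nonneg_left xc2 ha, mul_le_mul_of_nonneg_left yc2 hb]
  · nlinarith [mul_le_mul_of_nonneg_left xc3 ha, mul_le_mul_of_nonneg_left yc3 hb]
  · nlinarith [mul_le_mul_of_nonneg_left xc4 ha, mul_le_mul_of_nonneg_left yc4 hb]

lemma hdP_subset_hull (V C : ℝ) (hV : 0 < V) (hC : V < C) :
    hdP V C ⊆ convexHull ℝ (Set.range (hdv V C)) := by
  have h1 : (0:ℝ) < 2*C - V := by linarith
  have h2 : (0:ℝ) < C + V := by linarith
  have h3 : (0:ℝ) < C := by linarith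
  have h4 : (0:ℝ) < C - V := by linarith
  intro p hp
  rw [hd_mem_iff] at hp
  obtain ⟨h00, h01, h10, h11, hs, c1, c2, c3, c4⟩ := hp
  rcases le_or_gt ((C-V)^2 * p 0 0) (V^2 * p 1 1) with hcase | hcase
  · set w : Fin 5 → ℝ :=
      ![p 0 1 - V/(C-V) * p 1 1, p 1 0 - V/(C-V) * p 1 1, 0,
        (p 1 1 - ((C-V)/V)^2 * p 0 0) * ((C+V)/(C-V)), p 0 0 * (C/V)^2] with hw
    have hw0 : ∀ i ∈ Finset.univ, 0 ≤ w i := by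
      intro i _
      fin_cases i
      · show (0:ℝ) ≤ p 0 1 - V/(C-V) * p 1 1
        rw [sub_nonneg, div_mul_eq_mul_div, div_le_iff₀ h4]; linarith
      · show (0:ℝ) ≤ p 1 0 - V/(C-V) * p 1 1
        rw [sub_nonneg, div_mul_eq_mul_div, div_le_iff₀ h4]; linarith
      · show (0:ℝ) ≤ (0:ℝ)
        exact le_rfl
      · show (0:ℝ) ≤ (p 1 1 - ((C-V)/V)^2 * p 0 0) * ((C+V)/(C-V))
        apply mul_nonneg
        · rw [sub_nonneg, div_pow, div_mul_eq_mul_div, div_le_iff₀ (by positivity)]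
          nlinarith
        · positivity
      · show (0:ℝ) ≤ p 0 0 * (C/V)^2
        positivity
    have hws : ∑ i, w i = 1 := by
      have e : ∑ i, w i = p 0 0 + p 0 1 + p 1 0 + p 1 1 := by
        simp [hw, Fin.sum_univ_five]
        field_simp
        ring
      rw [e, hs]
    have hmem := Finset.centerMass_mem_convexHull Finset.univ hw0 (by rw [hws]; norm_num)
      (fun i _ => Set.mem_range_self (f := hdv V C) i)
    have hcm : Finset.univ.centerMass w (hdv V C) = p := by
      rw [Finset.centerMass, hws, inv_one, one_smul, Fin.sum_univ_five]
      funext j k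
      simp only [Pi.add_apply, Pi.smul_apply, smul_eq_mul]
      fin_cases j <;> fin_cases k <;>
        · simp [hw, hdv]
          first
            | (field_simp; ring)
            | field_simp
            | ring
    rwa [hcm] at hmem
  · set w : Fin 5 → ℝ :=
      ![p 0 1 - (C-V)/V * p 0 0, p 1 0 - (C-V)/V * p 0 0,
        (p 0 0 - (V/(C-V))^2 * p 1 1) * ((2*C-V)/V), 0, p 1 1 * (C/(C-V))^2] with hw
    have hw0 : ∀ i ∈ Finset.univ, 0 ≤ w i := by
      intro i _
      fin_cases i
      · show (0:ℝ) ≤ p 0 1 - (C-V)/V * p 0 0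
        rw [sub_nonneg, div_mul_eq_mul_div, div_le_iff₀ hV]; linarith
      · show (0:ℝ) ≤ p 1 0 - (C-V)/V * p 0 0
        rw [sub_nonneg, div_mul_eq_mul_div, div_le_iff₀ hV]; linarith
      · show (0:ℝ) ≤ (p 0 0 - (V/(C-V))^2 * p 1 1) * ((2*C-V)/V)
        apply mul_nonneg
        · rw [sub_nonneg, div_pow, div_mul_eq_mul_div, div_le_iff₀ (by positivity)]
          nlinarith
        · positivity
      · show (0:ℝ) ≤ (0:ℝ)
        exact le_rfl
      · show (0:ℝ) ≤ p 1 1 * (C/(C-V))^2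
        positivity
    have hws : ∑ i, w i = 1 := by
      have e : ∑ i, w i = p 0 0 + p 0 1 + p 1 0 + p 1 1 := by
        simp [hw, Fin.sum_univ_five]
        field_simp
        ring
      rw [e, hs]
    have hmem := Finset.centerMass_mem_convexHull Finset.univ hw0 (by rw [hws]; norm_num)
      (fun i _ => Set.mem_range_self (f := hdv V C) i)
    have hcm : Finset.univ.centerMass w (hdv V C) = p := by
      rw [Finset.centerMass, hws, inv_one, one_smul, Fin.sum_univ_five]
      funext j k
      simp only [Pi.add_apply, Pi.smul_apply, smul_eq_mul]
      fin_cases j <;> fin_cases k <;>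
        · simp [hw, hdv]
          first
            | (field_simp [h1.ne', h3.ne', h4.ne', hV.ne', (ne_of_gt (by linarith) : C * 2 - V ≠ 0)]; ring)
            | field_simp
            | ring
    rwa [hcm] at hmem

lemma combo_eq_zero {a b u v : ℝ} (ha : 0 < a) (hb : 0 < b) (hu : 0 ≤ u) (hv : 0 ≤ v)
    (h : a * u + b * v = 0) : u = 0 ∧ v = 0 :=
  ⟨by nlinarith, by nlinarith⟩

-- characterizations of the five vertices by their tight constraints
lemma eq_v0 {V C : ℝ} (hV : 0 < V) (hC : V < C) {q : Fin 2 → Fin 2 → ℝ}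
    (hq : q ∈ hdP V C) (t1 : q 0 0 = 0) (t2 : q 1 0 = 0) (t3 : q 1 1 = 0) :
    q = hdv V C 0 := by
  rw [hd_mem_iff] at hq
  obtain ⟨-, -, -, -, hs, -⟩ := hq
  funext j k
  fin_cases j <;> fin_cases k <;> simp [hdv] <;> linarith

lemma eq_v1 {V C : ℝ} (hV : 0 < V) (hC : V < C) {q : Fin 2 → Fin 2 → ℝ}
    (hq : q ∈ hdP V C) (t1 : q 0 0 = 0) (t2 : q 0 1 = 0) (t3 : q 1 1 = 0) :
    q = hdv V C 1 := by
  rw [hd_mem_iff] at hq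
  obtain ⟨-, -, -, -, hs, -⟩ := hq
  funext j k
  fin_cases j <;> fin_cases k <;> simp [hdv] <;> linarith

lemma eq_v2 {V C : ℝ} (hV : 0 < V) (hC : V < C) {q : Fin 2 → Fin 2 → ℝ}
    (hq : q ∈ hdP V C) (t1 : q 1 1 = 0)
    (t2 : V * q 0 1 - (C - V) * q 0 0 = 0) (t3 : V * q 1 0 - (C - V) * q 0 0 = 0) :
    q = hdv V C 2 := by
  have h1 : (0:ℝ) < 2*C - V := by linarith
  rw [hd_mem_iff] at hq
  obtain ⟨-, -, -, -, hs, -⟩ := hq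
  have h00 : q 0 0 * (2*C - V) = V := by linear_combination V * hs - t2 - t3 - V * t1
  funext j k
  fin_cases j <;> fin_cases k <;> simp [hdv]
  · rw [eq_div_iff h1.ne']; exact h00
  · rw [eq_div_iff h1.ne']
    apply mul_left_cancel₀ hV.ne'
    linear_combination (2*C-V) * t2 + (C-V) * h00
  · rw [eq_div_iff h1.ne']
    apply mul_left_cancel₀ hV.ne'
    linear_combination (2*C-V) * t3 + (C-V) * h00
  · exact t1

lemma eq_v3 {V C : ℝ} (hV : 0 < V) (hC : V < C) {q : Fin 2 → Fin 2 → ℝ}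
    (hq : q ∈ hdP V C) (t1 : q 0 0 = 0)
    (t2 : (C - V) * q 1 0 - V * q 1 1 = 0) (t3 : (C - V) * q 0 1 - V * q 1 1 = 0) :
    q = hdv V C 3 := by
  have h2 : (0:ℝ) < C + V := by linarith
  have h4 : (0:ℝ) < C - V := by linarith
  rw [hd_mem_iff] at hq
  obtain ⟨-, -, -, -, hs, -⟩ := hq
  have h11 : q 1 1 * (C + V) = C - V := by
    linear_combination (C-V) * hs - t2 - t3 - (C-V) * t1
  funext j k
  fin_cases j <;> fin_cases k <;> simp [hdv]
  · exact t1
  · rw [eq_div_iff h2.ne']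
    apply mul_left_cancel₀ h4.ne'
    linear_combination (C+V) * t3 + V * h11
  · rw [eq_div_iff h2.ne']
    apply mul_left_cancel₀ h4.ne'
    linear_combination (C+V) * t2 + V * h11
  · rw [eq_div_iff h2.ne']; exact h11

lemma eq_v4 {V C : ℝ} (hV : 0 < V) (hC : V < C) {q : Fin 2 → Fin 2 → ℝ}
    (hq : q ∈ hdP V C)
    (t1 : V * q 0 1 - (C - V) * q 0 0 = 0) (t2 : V * q 1 0 - (C - V) * q 0 0 = 0)
    (t4 : (C - V) * q 1 0 - V * q 1 1 = 0) :
    q = hdv V C 4 := by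
  have h3 : (0:ℝ) < C := by linarith
  have h4 : (0:ℝ) < C - V := by linarith
  rw [hd_mem_iff] at hq
  obtain ⟨-, -, -, -, hs, -⟩ := hq
  have h00 : q 0 0 * C^2 = V^2 := by
    linear_combination V^2 * hs - V * t1 - V * t2 + V * t4 - (C-V) * t2
  funext j k
  fin_cases j <;> fin_cases k <;> simp [hdv]
  · rw [div_pow, eq_div_iff (by positivity)]; exact h00
  · rw [eq_div_iff (by positivity : (C:ℝ)^2 ≠ 0)]
    apply mul_left_cancel₀ hV.ne'
    linear_combination C^2 * t1 + (C-V) * h00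
  · rw [eq_div_iff (by positivity : (C:ℝ)^2 ≠ 0)]
    apply mul_left_cancel₀ hV.ne'
    linear_combination C^2 * t2 + (C-V) * h00
  · rw [div_pow, eq_div_iff (by positivity : (C:ℝ)^2 ≠ 0)]
    apply mul_left_cancel₀ (by positivity : (V:ℝ)^2 ≠ 0)
    linear_combination (-V) * C^2 * t4 + (C-V) * C^2 * t2 + (C-V)^2 * h00

lemma hdv_extreme (V C : ℝ) (hV : 0 < V) (hC : V < C) (i : Fin 5) :
    hdv V C i ∈ Set.extremePoints ℝ (hdP V C) := by
  have h1 : (0:ℝ) < 2*C - V := by linarith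
  have h2 : (0:ℝ) < C + V := by linarith
  have h3 : (0:ℝ) < C := by linarith
  have h4 : (0:ℝ) < C - V := by linarith
  refine ⟨hdv_mem V C hV hC i, ?_⟩
  intro x hx y hy hseg
  obtain ⟨a, b, ha, hb, hab, hxy⟩ := hseg
  have e00 := congrFun (congrFun hxy 0) 0
  have e01 := congrFun (congrFun hxy 0) 1
  have e10 := congrFun (congrFun hxy 1) 0
  have e11 := congrFun (congrFun hxy 1) 1
  simp only [Pi.add_apply, Pi.smul_apply, smul_eq_mul] at e00 e01 e10 e11
  have hx' := (hd_mem_iff V C x).1 hx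
  have hy' := (hd_mem_iff V C y).1 hy
  obtain ⟨x0, x1, x2, x3, xs, xc1, xc2, xc3, xc4⟩ := hx'
  obtain ⟨y0, y1, y2, y3, ys, yc1, yc2, yc3, yc4⟩ := hy'
  fin_cases i <;> simp [hdv] at e00 e01 e10 e11
  · -- v0
    obtain ⟨u1, v1⟩ := combo_eq_zero ha hb x0 y0 e00
    obtain ⟨u2, v2⟩ := combo_eq_zero ha hb x2 y2 e10
    obtain ⟨u3, v3⟩ := combo_eq_zero ha hb x3 y3 e11
    exact eq_v0 hV hC hx u1 u2 u3
  · -- v1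
    obtain ⟨u1, v1⟩ := combo_eq_zero ha hb x0 y0 e00
    obtain ⟨u2, v2⟩ := combo_eq_zero ha hb x1 y1 e01
    obtain ⟨u3, v3⟩ := combo_eq_zero ha hb x3 y3 e11
    exact eq_v1 hV hC hx u1 u2 u3
  · -- v2
    obtain ⟨u1, v1⟩ := combo_eq_zero ha hb x3 y3 e11
    obtain ⟨u2, v2⟩ := combo_eq_zero ha hb (by linarith : 0 ≤ V * x 0 1 - (C-V) * x 0 0)
      (by linarith : 0 ≤ V * y 0 1 - (C-V) * y 0 0)
      (by linear_combination V * e01 - (C-V) * e00)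
    obtain ⟨u3, v3⟩ := combo_eq_zero ha hb (by linarith : 0 ≤ V * x 1 0 - (C-V) * x 0 0)
      (by linarith : 0 ≤ V * y 1 0 - (C-V) * y 0 0)
      (by linear_combination V * e10 - (C-V) * e00)
    exact eq_v2 hV hC hx u1 u2 u3
  · -- v3
    obtain ⟨u1, v1⟩ := combo_eq_zero ha hb x0 y0 e00
    obtain ⟨u2, v2⟩ := combo_eq_zero ha hb (by linarith : 0 ≤ (C-V) * x 1 0 - V * x 1 1)
      (by linarith : 0 ≤ (C-V) * y 1 0 - V * y 1 1)
      (by linear_combination (C-V) * e10 - V * e11)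
    obtain ⟨u3, v3⟩ := combo_eq_zero ha hb (by linarith : 0 ≤ (C-V) * x 0 1 - V * x 1 1)
      (by linarith : 0 ≤ (C-V) * y 0 1 - V * y 1 1)
      (by linear_combination (C-V) * e01 - V * e11)
    exact eq_v3 hV hC hx u1 u2 u3
  · -- v4
    obtain ⟨u1, v1⟩ := combo_eq_zero ha hb (by linarith : 0 ≤ V * x 0 1 - (C-V) * x 0 0)
      (by linarith : 0 ≤ V * y 0 1 - (C-V) * y 0 0)
      (by linear_combination V * e01 - (C-V) * e00)
    obtain ⟨u2, v2⟩ := combo_eq_zero ha hb (by linarith : 0 ≤ V * x 1 0 - (C-V) * x 0 0)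
      (by linarith : 0 ≤ V * y 1 0 - (C-V) * y 0 0)
      (by linear_combination V * e10 - (C-V) * e00)
    obtain ⟨u3, v3⟩ := combo_eq_zero ha hb (by linarith : 0 ≤ (C-V) * x 1 0 - V * x 1 1)
      (by linarith : 0 ≤ (C-V) * y 1 0 - V * y 1 1)
      (by linear_combination (C-V) * e10 - V * e11)
    exact eq_v4 hV hC hx u1 u2 u3

lemma hdv_inj (V C : ℝ) (hV : 0 < V) (hC : V < C) : Function.Injective (hdv V C) := by
  have h1 : (0:ℝ) < V/(2*C-V) := by apply div_pos hV; linarith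
  have h2 : (0:ℝ) < V/(C+V) := by apply div_pos hV; linarith
  have h3 : (0:ℝ) < (V/C)^2 := pow_pos (div_pos hV (by linarith)) 2
  have h4 : (0:ℝ) < (C-V)/(C+V) := by apply div_pos; linarith; linarith
  have h5 : (0:ℝ) < ((C-V)/C)^2 := pow_pos (div_pos (by linarith) (by linarith)) 2
  intro i j h
  have e00 := congrFun (congrFun h 0) 0
  have e01 := congrFun (congrFun h 0) 1
  have e11 := congrFun (congrFun h 1) 1
  fin_cases i <;> fin_cases j <;> simp [hdv] at e00 e01 e11 ⊢ <;>
    (try rcases e00 with e00 | e00) <;> (try rcases e01 with e01 | e01) <;>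
    (try rcases e11 with e11 | e11) <;> linarith

/-- the sum functional -/
noncomputable def sumL : (Fin 2 → Fin 2 → ℝ) →ₗ[ℝ] ℝ where
  toFun p := ∑ j, ∑ k, p j k
  map_add' p q := by simp [Finset.sum_add_distrib]
  map_smul' c p := by simp [Finset.mul_sum]; ring

lemma finrank_ker_sumL : Module.finrank ℝ (LinearMap.ker sumL) = 3 := by
  have hsurj : Function.Surjective sumL := by
    intro r
    refine ⟨fun _ _ => r/4, ?_⟩
    simp [sumL, Fin.sum_univ_two]
    ring
  have h := LinearMap.finrank_range_add_finrank_ker sumL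
  rw [LinearMap.range_eq_top.2 hsurj, finrank_top] at h
  have hd : Module.finrank ℝ (Fin 2 → Fin 2 → ℝ) = 4 := by
    rw [Module.finrank_pi_fintype]
    simp [Module.finrank_fintype_fun_eq_card]
  rw [hd] at h
  simp at h
  omega

lemma dim_three (V C : ℝ) (hV : 0 < V) (hC : V < C) :
    Module.finrank ℝ (affineSpan ℝ (hdP V C)).direction = 3 := by
  have hc1 : (0:ℝ) < 2*C - V := by linarith
  have hc2 : (0:ℝ) < C + V := by linarith
  have hc4 : (0:ℝ) < C - V := by linarith
  rw [direction_affineSpan]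
  -- upper bound
  have hupper : vectorSpan ℝ (hdP V C) ≤ LinearMap.ker sumL := by
    rw [vectorSpan_def]
    rw [Submodule.span_le]
    rintro v ⟨p, hp, q, hq, rfl⟩
    have hp1 := hp.2.1
    have hq1 := hq.2.1
    simp only [LinearMap.mem_ker, SetLike.mem_coe, sumL, LinearMap.coe_mk, AddHom.coe_mk,
      vsub_eq_sub, Pi.sub_apply, Finset.sum_sub_distrib]
    rw [hp1, hq1]
    ring
  -- lower bound
  set u : Fin 3 → (Fin 2 → Fin 2 → ℝ) :=
    ![hdv V C 1 - hdv V C 0, hdv V C 2 - hdv V C 0, hdv V C 3 - hdv V C 0] with hu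
  have hli : LinearIndependent ℝ u := by
    rw [Fintype.linearIndependent_iff]
    intro g hg
    rw [Fin.sum_univ_three] at hg
    have c00 := congrFun (congrFun hg 0) 0
    have c11 := congrFun (congrFun hg 1) 1
    have c10 := congrFun (congrFun hg 1) 0
    simp [hu, hdv] at c00 c11 c10
    have hg1 : g 1 = 0 := by
      rcases c00 with h | h | h
      · exact h
      · linarith
      · linarith
    have hg2 : g 2 = 0 := by
      rcases c11 with h | h | h
      · exact h
      · linarith
      · linarith
    have hg0 : g 0 = 0 := by
      rw [hg1, hg2] at c10
      simpa using c10
    intro i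
    fin_cases i <;> assumption
  have hsub : Submodule.span ℝ (Set.range u) ≤ vectorSpan ℝ (hdP V C) := by
    rw [Submodule.span_le]
    rintro v ⟨i, rfl⟩
    fin_cases i <;>
      simpa [hu, vsub_eq_sub] using
        vsub_mem_vectorSpan ℝ (hdv_mem V C hV hC _) (hdv_mem V C hV hC 0)
  have hle1 : Module.finrank ℝ (vectorSpan ℝ (hdP V C)) ≤ 3 := by
    have := Submodule.finrank_mono hupper
    rwa [finrank_ker_sumL] at this
  have hle2 : 3 ≤ Module.finrank ℝ (vectorSpan ℝ (hdP V C)) := by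
    have := Submodule.finrank_mono hsub
    rwa [finrank_span_eq_card hli, Fintype.card_fin] at this
  omega

lemma card_five (V C : ℝ) (hV : 0 < V) (hC : V < C) :
    (Set.extremePoints ℝ (hdP V C)).ncard = 5 := by
  have hull_eq : hdP V C = convexHull ℝ (Set.range (hdv V C)) := by
    apply Set.Subset.antisymm (hdP_subset_hull V C hV hC)
    apply convexHull_min
    · rintro _ ⟨i, rfl⟩
      exact hdv_mem V C hV hC i
    · exact hdP_convex V C
  have hext : Set.extremePoints ℝ (hdP V C) = Set.range (hdv V C) := by
    apply subset_antisymm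
    · rw [hull_eq]
      exact extremePoints_convexHull_subset
    · rintro _ ⟨i, rfl⟩
      exact hdv_extreme V C hV hC i
  rw [hext, ← Set.image_univ, Set.ncard_image_of_injective _ (hdv_inj V C hV hC),
    Set.ncard_univ, Nat.card_eq_fintype_card, Fintype.card_fin]

/-- For the Hawk–Dove game with `C > V > 0`, the correlated equilibrium polytope has
maximal dimension `3` and exactly `5` vertices. -/
theorem hawkDove_maximal_dim_and_five_vertices
    (V C : ℝ) (hV : 0 < V) (hC : V < C) :
    Module.finrank ℝ
        (affineSpan ℝ (CorrelatedEqPolytope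
          ![![(V - C)/2, V], ![0, V/2]] ![![(V - C)/2, 0], ![V, V/2]])).direction = 3 ∧
      (Set.extremePoints ℝ (CorrelatedEqPolytope
          ![![(V - C)/2, V], ![0, V/2]] ![![(V - C)/2, 0], ![V, V/2]])).ncard = 5 :=
  ⟨dim_three V C hV hC, card_five V C hV hC⟩
end

section
/- Let G be a (2 × 2)-game and set Y₁ = X¹ 1 1 − X¹ 2 1, Y₂ = X¹ 1 2 − X¹ 2 2, Z₁ = X² 1 1 − X² 1 2, Z₂ = X² 2 1 − X² 2 2, and assume Y₁, Y₂, Z₁, Z₂ are all nonzero. If the correlated equilibrium polytope P_G has maximal dimension 3 (the dimension of the direction of its affine span equals 3), then P_G has exactly 5 extreme points. -/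
open Set

namespace CE2x2

theorem mem_CE_iff (X1 X2 : Fin 2 → Fin 2 → ℝ) (Y₁ Y₂ Z₁ Z₂ : ℝ)
    (hY₁ : Y₁ = X1 0 0 - X1 1 0) (hY₂ : Y₂ = X1 0 1 - X1 1 1)
    (hZ₁ : Z₁ = X2 0 0 - X2 0 1) (hZ₂ : Z₂ = X2 1 0 - X2 1 1)
    (p : Fin 2 → Fin 2 → ℝ) :
    p ∈ CorrelatedEqPolytope X1 X2 ↔
      (∀ j k, 0 ≤ p j k) ∧ p 0 0 + p 0 1 + p 1 0 + p 1 1 = 1 ∧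
      0 ≤ Y₁ * p 0 0 + Y₂ * p 0 1 ∧ Y₁ * p 1 0 + Y₂ * p 1 1 ≤ 0 ∧
      0 ≤ Z₁ * p 0 0 + Z₂ * p 1 0 ∧ Z₁ * p 0 1 + Z₂ * p 1 1 ≤ 0 := by
  subst hY₁ hY₂ hZ₁ hZ₂
  simp only [CorrelatedEqPolytope, Set.mem_setOf_eq, Fin.sum_univ_two]
  constructor
  · rintro ⟨h0, h1, h2, h3⟩
    have h21 := h2 0 1
    have h22 := h2 1 0
    have h31 := h3 0 1
    have h32 := h3 1 0
    exact ⟨h0, by linarith, by linarith, by linarith, by linarith, by linarith⟩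
  · rintro ⟨h0, h1, h2, h3, h4, h5⟩
    refine ⟨h0, by linarith, fun k l => ?_, fun k l => ?_⟩ <;>
      fin_cases k <;> fin_cases l <;> simp <;> nlinarith


def Q (α β : ℝ) : Set (Fin 2 → Fin 2 → ℝ) :=
  {p | (∀ j k, 0 ≤ p j k) ∧ p 0 0 + p 0 1 + p 1 0 + p 1 1 = 1 ∧
    α * p 0 1 ≤ p 0 0 ∧ p 1 0 ≤ α * p 1 1 ∧ β * p 1 0 ≤ p 0 0 ∧ p 0 1 ≤ β * p 1 1}

variable (α β : ℝ)

noncomputable def V1 : Fin 2 → Fin 2 → ℝ := ![![1, 0], ![0, 0]]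
noncomputable def V2 : Fin 2 → Fin 2 → ℝ := ![![0, 0], ![0, 1]]
noncomputable def NN : Fin 2 → Fin 2 → ℝ :=
  ![![α * β / ((1 + α) * (1 + β)), β / ((1 + α) * (1 + β))],
    ![α / ((1 + α) * (1 + β)), 1 / ((1 + α) * (1 + β))]]
noncomputable def W2 : Fin 2 → Fin 2 → ℝ :=
  ![![α * β / (1 + α + α * β), 0], ![α / (1 + α + α * β), 1 / (1 + α + α * β)]]
noncomputable def W3 : Fin 2 → Fin 2 → ℝ :=
  ![![α * β / (1 + β + α * β), β / (1 + β + α * β)], ![0, 1 / (1 + β + α * β)]]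

variable {α β}

theorem convex_Q : Convex ℝ (Q α β) := by
  rintro x ⟨hx0, hx1, hx2, hx3, hx4, hx5⟩ y ⟨hy0, hy1, hy2, hy3, hy4, hy5⟩ a b ha hb hab
  have hco : ∀ j k, (a • x + b • y) j k = a * x j k + b * y j k := by
    intro j k; simp [Pi.add_apply, Pi.smul_apply, smul_eq_mul]
  refine ⟨fun j k => ?_, ?_, ?_, ?_, ?_, ?_⟩ <;> simp only [hco]
  · have := hx0 j k; have := hy0 j k; positivity
  · nlinarith
  · nlinarith [mul_le_mul_of_nonneg_left hx2 ha, mul_le_mul_of_nonneg_left hy2 hb]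
  · nlinarith [mul_le_mul_of_nonneg_left hx3 ha, mul_le_mul_of_nonneg_left hy3 hb]
  · nlinarith [mul_le_mul_of_nonneg_left hx4 ha, mul_le_mul_of_nonneg_left hy4 hb]
  · nlinarith [mul_le_mul_of_nonneg_left hx5 ha, mul_le_mul_of_nonneg_left hy5 hb]

section
variable (hα : 0 < α) (hβ : 0 < β)
include hα hβ

omit hα hβ in
theorem V1_mem : V1 ∈ Q α β := by
  refine ⟨fun j k => ?_, ?_, ?_, ?_, ?_, ?_⟩ <;>
    first
      | (fin_cases j <;> fin_cases k <;> norm_num [V1])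
      | norm_num [V1]

theorem V2_mem : V2 ∈ Q α β := by
  refine ⟨fun j k => ?_, ?_, ?_, ?_, ?_, ?_⟩ <;>
    first
      | (fin_cases j <;> fin_cases k <;> norm_num [V2])
      | (norm_num [V2]; try positivity)


theorem NN_mem : NN α β ∈ Q α β := by
  have hs : (0:ℝ) < (1 + α) * (1 + β) := by positivity
  refine ⟨fun j k => ?_, ?_, ?_, ?_, ?_, ?_⟩ <;>
      simp only [NN, Matrix.cons_val_zero, Matrix.cons_val_one, Matrix.head_cons]
  · fin_cases j <;> fin_cases k <;> simp <;> positivity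
  · field_simp; ring
  · exact le_of_eq (by ring)
  · exact le_of_eq (by ring)
  · exact le_of_eq (by ring)
  · exact le_of_eq (by ring)

theorem W2_mem : W2 α β ∈ Q α β := by
  have hs : (0:ℝ) < 1 + α + α * β := by positivity
  refine ⟨fun j k => ?_, ?_, ?_, ?_, ?_, ?_⟩ <;>
      simp only [W2, Matrix.cons_val_zero, Matrix.cons_val_one, Matrix.head_cons]
  · fin_cases j <;> fin_cases k <;> simp <;> positivity
  · field_simp; ring
  · rw [mul_zero]; positivity
  · exact le_of_eq (by ring)
  · exact le_of_eq (by ring)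
  · positivity

theorem W3_mem : W3 α β ∈ Q α β := by
  have hs : (0:ℝ) < 1 + β + α * β := by positivity
  refine ⟨fun j k => ?_, ?_, ?_, ?_, ?_, ?_⟩ <;>
      simp only [W3, Matrix.cons_val_zero, Matrix.cons_val_one, Matrix.head_cons]
  · fin_cases j <;> fin_cases k <;> simp <;> positivity
  · field_simp; ring
  · exact le_of_eq (by ring)
  · positivity
  · rw [mul_zero]; positivity
  · exact le_of_eq (by ring)


end

set_option maxHeartbeats 1000000 in
theorem Q_subset_hull (hα : 0 < α) (hβ : 0 < β) :
    Q α β ⊆ convexHull ℝ {V1, V2, NN α β, W2 α β, W3 α β} := by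
  have hα' := hα.ne'
  have hβ' := hβ.ne'
  have hs : (0:ℝ) < (1 + α) * (1 + β) := by positivity
  have hs2 : (0:ℝ) < 1 + α + α * β := by positivity
  have hs3 : (0:ℝ) < 1 + β + α * β := by positivity
  rintro p ⟨h0, h1, h2, h3, h4, h5⟩
  have h00 := h0 0 0; have h01 := h0 0 1; have h10 := h0 1 0; have h11 := h0 1 1
  rcases le_total (α * p 0 1) (β * p 1 0) with hm | hm
  · -- tetrahedron V1, NN, W2, V2
    have hw0 : (0:ℝ) ≤ p 0 0 - β * p 1 0 := by linarith
    have hw1 : (0:ℝ) ≤ (1 + α) * (1 + β) * (p 0 1 / β) := by positivity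
    have hw2 : (0:ℝ) ≤ (1 + α + α * β) * (p 1 0 / α - p 0 1 / β) := by
      have : p 0 1 / β ≤ p 1 0 / α := by rw [div_le_div_iff₀ hβ hα]; nlinarith
      nlinarith
    have hw3 : (0:ℝ) ≤ p 1 1 - p 1 0 / α := by
      have : p 1 0 / α ≤ p 1 1 := by rw [div_le_iff₀ hα]; nlinarith
      linarith
    set w : Fin 4 → ℝ :=
      ![p 0 0 - β * p 1 0, (1 + α) * (1 + β) * (p 0 1 / β),
        (1 + α + α * β) * (p 1 0 / α - p 0 1 / β), p 1 1 - p 1 0 / α] with hwdef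
    have hwsum : ∑ i, w i = 1 := by
      rw [Fin.sum_univ_four]
      show p 0 0 - β * p 1 0 + (1 + α) * (1 + β) * (p 0 1 / β)
        + (1 + α + α * β) * (p 1 0 / α - p 0 1 / β) + (p 1 1 - p 1 0 / α) = 1
      have : p 0 0 - β * p 1 0 + (1 + α) * (1 + β) * (p 0 1 / β)
        + (1 + α + α * β) * (p 1 0 / α - p 0 1 / β) + (p 1 1 - p 1 0 / α)
          = p 0 0 + p 0 1 + p 1 0 + p 1 1 := by field_simp; ring
      rw [this, h1]
    have key : (p 0 0 - β * p 1 0) • V1 + ((1 + α) * (1 + β) * (p 0 1 / β)) • NN α β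
        + ((1 + α + α * β) * (p 1 0 / α - p 0 1 / β)) • W2 α β
        + (p 1 1 - p 1 0 / α) • V2 = p := by
      have e00 : ((p 0 0 - β * p 1 0) • V1 + ((1 + α) * (1 + β) * (p 0 1 / β)) • NN α β
          + ((1 + α + α * β) * (p 1 0 / α - p 0 1 / β)) • W2 α β
          + (p 1 1 - p 1 0 / α) • V2) 0 0 = p 0 0 := by
        show (p 0 0 - β * p 1 0) * 1
          + (1 + α) * (1 + β) * (p 0 1 / β) * (α * β / ((1 + α) * (1 + β)))
          + (1 + α + α * β) * (p 1 0 / α - p 0 1 / β) * (α * β / (1 + α + α * β))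
          + (p 1 1 - p 1 0 / α) * 0 = p 0 0
        field_simp; ring
      have e01 : ((p 0 0 - β * p 1 0) • V1 + ((1 + α) * (1 + β) * (p 0 1 / β)) • NN α β
          + ((1 + α + α * β) * (p 1 0 / α - p 0 1 / β)) • W2 α β
          + (p 1 1 - p 1 0 / α) • V2) 0 1 = p 0 1 := by
        show (p 0 0 - β * p 1 0) * 0
          + (1 + α) * (1 + β) * (p 0 1 / β) * (β / ((1 + α) * (1 + β)))
          + (1 + α + α * β) * (p 1 0 / α - p 0 1 / β) * 0
          + (p 1 1 - p 1 0 / α) * 0 = p 0 1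
        field_simp; ring
      have e10 : ((p 0 0 - β * p 1 0) • V1 + ((1 + α) * (1 + β) * (p 0 1 / β)) • NN α β
          + ((1 + α + α * β) * (p 1 0 / α - p 0 1 / β)) • W2 α β
          + (p 1 1 - p 1 0 / α) • V2) 1 0 = p 1 0 := by
        show (p 0 0 - β * p 1 0) * 0
          + (1 + α) * (1 + β) * (p 0 1 / β) * (α / ((1 + α) * (1 + β)))
          + (1 + α + α * β) * (p 1 0 / α - p 0 1 / β) * (α / (1 + α + α * β))
          + (p 1 1 - p 1 0 / α) * 0 = p 1 0
        field_simp; ring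
      have e11 : ((p 0 0 - β * p 1 0) • V1 + ((1 + α) * (1 + β) * (p 0 1 / β)) • NN α β
          + ((1 + α + α * β) * (p 1 0 / α - p 0 1 / β)) • W2 α β
          + (p 1 1 - p 1 0 / α) • V2) 1 1 = p 1 1 := by
        show (p 0 0 - β * p 1 0) * 0
          + (1 + α) * (1 + β) * (p 0 1 / β) * (1 / ((1 + α) * (1 + β)))
          + (1 + α + α * β) * (p 1 0 / α - p 0 1 / β) * (1 / (1 + α + α * β))
          + (p 1 1 - p 1 0 / α) * 1 = p 1 1
        field_simp; ring
      funext j k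
      fin_cases j <;> fin_cases k
      · exact e00
      · exact e01
      · exact e10
      · exact e11
    have hmem : Finset.univ.centerMass w ![V1, NN α β, W2 α β, V2] ∈
        convexHull ℝ ({V1, V2, NN α β, W2 α β, W3 α β} : Set (Fin 2 → Fin 2 → ℝ)) := by
      refine Finset.centerMass_mem_convexHull _ ?_ (by rw [hwsum]; norm_num) ?_
      · intro i _
        fin_cases i
        · exact hw0
        · exact hw1
        · exact hw2
        · exact hw3
      · intro i _
        fin_cases i
        · exact Set.mem_insert _ _
        · exact Set.mem_insert_of_mem _ (Set.mem_insert_of_mem _ (Set.mem_insert _ _))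
        · exact Set.mem_insert_of_mem _ (Set.mem_insert_of_mem _
            (Set.mem_insert_of_mem _ (Set.mem_insert _ _)))
        · exact Set.mem_insert_of_mem _ (Set.mem_insert _ _)
    rw [Finset.centerMass_eq_of_sum_1 _ _ hwsum, Fin.sum_univ_four] at hmem
    exact key ▸ hmem
  · -- tetrahedron V1, NN, W3, V2
    have hw0 : (0:ℝ) ≤ p 0 0 - α * p 0 1 := by linarith
    have hw1 : (0:ℝ) ≤ (1 + α) * (1 + β) * (p 1 0 / α) := by positivity
    have hw2 : (0:ℝ) ≤ (1 + β + α * β) * (p 0 1 / β - p 1 0 / α) := by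
      have : p 1 0 / α ≤ p 0 1 / β := by rw [div_le_div_iff₀ hα hβ]; nlinarith
      nlinarith
    have hw3 : (0:ℝ) ≤ p 1 1 - p 0 1 / β := by
      have : p 0 1 / β ≤ p 1 1 := by rw [div_le_iff₀ hβ]; nlinarith
      linarith
    set w : Fin 4 → ℝ :=
      ![p 0 0 - α * p 0 1, (1 + α) * (1 + β) * (p 1 0 / α),
        (1 + β + α * β) * (p 0 1 / β - p 1 0 / α), p 1 1 - p 0 1 / β] with hwdef
    have hwsum : ∑ i, w i = 1 := by
      rw [Fin.sum_univ_four]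
      show p 0 0 - α * p 0 1 + (1 + α) * (1 + β) * (p 1 0 / α)
        + (1 + β + α * β) * (p 0 1 / β - p 1 0 / α) + (p 1 1 - p 0 1 / β) = 1
      have : p 0 0 - α * p 0 1 + (1 + α) * (1 + β) * (p 1 0 / α)
        + (1 + β + α * β) * (p 0 1 / β - p 1 0 / α) + (p 1 1 - p 0 1 / β)
          = p 0 0 + p 0 1 + p 1 0 + p 1 1 := by field_simp; ring
      rw [this, h1]
    have key : (p 0 0 - α * p 0 1) • V1 + ((1 + α) * (1 + β) * (p 1 0 / α)) • NN α β
        + ((1 + β + α * β) * (p 0 1 / β - p 1 0 / α)) • W3 α β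
        + (p 1 1 - p 0 1 / β) • V2 = p := by
      have e00 : ((p 0 0 - α * p 0 1) • V1 + ((1 + α) * (1 + β) * (p 1 0 / α)) • NN α β
          + ((1 + β + α * β) * (p 0 1 / β - p 1 0 / α)) • W3 α β
          + (p 1 1 - p 0 1 / β) • V2) 0 0 = p 0 0 := by
        show (p 0 0 - α * p 0 1) * 1
          + (1 + α) * (1 + β) * (p 1 0 / α) * (α * β / ((1 + α) * (1 + β)))
          + (1 + β + α * β) * (p 0 1 / β - p 1 0 / α) * (α * β / (1 + β + α * β))
          + (p 1 1 - p 0 1 / β) * 0 = p 0 0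
        field_simp; ring
      have e01 : ((p 0 0 - α * p 0 1) • V1 + ((1 + α) * (1 + β) * (p 1 0 / α)) • NN α β
          + ((1 + β + α * β) * (p 0 1 / β - p 1 0 / α)) • W3 α β
          + (p 1 1 - p 0 1 / β) • V2) 0 1 = p 0 1 := by
        show (p 0 0 - α * p 0 1) * 0
          + (1 + α) * (1 + β) * (p 1 0 / α) * (β / ((1 + α) * (1 + β)))
          + (1 + β + α * β) * (p 0 1 / β - p 1 0 / α) * (β / (1 + β + α * β))
          + (p 1 1 - p 0 1 / β) * 0 = p 0 1
        field_simp; ring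
      have e10 : ((p 0 0 - α * p 0 1) • V1 + ((1 + α) * (1 + β) * (p 1 0 / α)) • NN α β
          + ((1 + β + α * β) * (p 0 1 / β - p 1 0 / α)) • W3 α β
          + (p 1 1 - p 0 1 / β) • V2) 1 0 = p 1 0 := by
        show (p 0 0 - α * p 0 1) * 0
          + (1 + α) * (1 + β) * (p 1 0 / α) * (α / ((1 + α) * (1 + β)))
          + (1 + β + α * β) * (p 0 1 / β - p 1 0 / α) * 0
          + (p 1 1 - p 0 1 / β) * 0 = p 1 0
        field_simp; ring
      have e11 : ((p 0 0 - α * p 0 1) • V1 + ((1 + α) * (1 + β) * (p 1 0 / α)) • NN α β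
          + ((1 + β + α * β) * (p 0 1 / β - p 1 0 / α)) • W3 α β
          + (p 1 1 - p 0 1 / β) • V2) 1 1 = p 1 1 := by
        show (p 0 0 - α * p 0 1) * 0
          + (1 + α) * (1 + β) * (p 1 0 / α) * (1 / ((1 + α) * (1 + β)))
          + (1 + β + α * β) * (p 0 1 / β - p 1 0 / α) * (1 / (1 + β + α * β))
          + (p 1 1 - p 0 1 / β) * 1 = p 1 1
        field_simp; ring
      funext j k
      fin_cases j <;> fin_cases k
      · exact e00
      · exact e01
      · exact e10
      · exact e11
    have hmem : Finset.univ.centerMass w ![V1, NN α β, W3 α β, V2] ∈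
        convexHull ℝ ({V1, V2, NN α β, W2 α β, W3 α β} : Set (Fin 2 → Fin 2 → ℝ)) := by
      refine Finset.centerMass_mem_convexHull _ ?_ (by rw [hwsum]; norm_num) ?_
      · intro i _
        fin_cases i
        · exact hw0
        · exact hw1
        · exact hw2
        · exact hw3
      · intro i _
        fin_cases i
        · exact Set.mem_insert _ _
        · exact Set.mem_insert_of_mem _ (Set.mem_insert_of_mem _ (Set.mem_insert _ _))
        · exact Set.mem_insert_of_mem _ (Set.mem_insert_of_mem _ (Set.mem_insert_of_mem _
            (Set.mem_insert_of_mem _ (Set.mem_singleton _))))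
        · exact Set.mem_insert_of_mem _ (Set.mem_insert _ _)
    rw [Finset.centerMass_eq_of_sum_1 _ _ hwsum, Fin.sum_univ_four] at hmem
    exact key ▸ hmem


/-- two nonneg things with positive-coefficient zero combination are zero -/
lemma tight {a b u v : ℝ} (ha : 0 < a) (hb : 0 < b) (hu : 0 ≤ u) (hv : 0 ≤ v)
    (h : a * u + b * v = 0) : u = 0 ∧ v = 0 :=
  ⟨by nlinarith, by nlinarith⟩

section
variable (hα : 0 < α) (hβ : 0 < β)

/-- extract coordinatewise equations from an open segment membership -/
lemma coords {x y v : Fin 2 → Fin 2 → ℝ} {a b : ℝ} (h : a • x + b • y = v) :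
    ∀ j k, a * x j k + b * y j k = v j k := by
  intro j k
  have := congr_fun (congr_fun h j) k
  simpa [Pi.add_apply, Pi.smul_apply, smul_eq_mul] using this

theorem V1_extreme (hmem : V1 ∈ Q α β) : V1 ∈ Set.extremePoints ℝ (Q α β) := by
  refine ⟨hmem, ?_⟩
  rintro x hx y hy ⟨a, b, ha, hb, hab, hsum⟩
  have H := coords hsum
  have key : ∀ z : Fin 2 → Fin 2 → ℝ, z ∈ Q α β →
      z 0 1 = 0 → z 1 0 = 0 → z 1 1 = 0 → z = V1 := by
    rintro z ⟨h0, h1, _, _, _, _⟩ e1 e2 e3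
    funext j k
    fin_cases j <;> fin_cases k
    · show z 0 0 = 1; linarith
    · exact e1
    · exact e2
    · exact e3
  have t01 := tight ha hb (hx.1 0 1) (hy.1 0 1) (H 0 1)
  have t10 := tight ha hb (hx.1 1 0) (hy.1 1 0) (H 1 0)
  have t11 := tight ha hb (hx.1 1 1) (hy.1 1 1) (H 1 1)
  exact key x hx t01.1 t10.1 t11.1

theorem V2_extreme (hmem : V2 ∈ Q α β) : V2 ∈ Set.extremePoints ℝ (Q α β) := by
  refine ⟨hmem, ?_⟩
  rintro x hx y hy ⟨a, b, ha, hb, hab, hsum⟩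
  have H := coords hsum
  have key : ∀ z : Fin 2 → Fin 2 → ℝ, z ∈ Q α β →
      z 0 0 = 0 → z 0 1 = 0 → z 1 0 = 0 → z = V2 := by
    rintro z ⟨h0, h1, _, _, _, _⟩ e1 e2 e3
    funext j k
    fin_cases j <;> fin_cases k
    · exact e1
    · exact e2
    · exact e3
    · show z 1 1 = 1; linarith
  have t00 := tight ha hb (hx.1 0 0) (hy.1 0 0) (H 0 0)
  have t01 := tight ha hb (hx.1 0 1) (hy.1 0 1) (H 0 1)
  have t10 := tight ha hb (hx.1 1 0) (hy.1 1 0) (H 1 0)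
  exact key x hx t00.1 t01.1 t10.1

include hα hβ in
theorem NN_extreme (hmem : NN α β ∈ Q α β) : NN α β ∈ Set.extremePoints ℝ (Q α β) := by
  have hα' := hα.ne'
  have hβ' := hβ.ne'
  have hs : (0:ℝ) < (1 + α) * (1 + β) := by positivity
  refine ⟨hmem, ?_⟩
  rintro x hx y hy ⟨a, b, ha, hb, hab, hsum⟩
  have H := coords hsum
  have key : ∀ z : Fin 2 → Fin 2 → ℝ, z ∈ Q α β →
      z 0 0 - α * z 0 1 = 0 → α * z 1 1 - z 1 0 = 0 → β * z 1 1 - z 0 1 = 0 →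
      z = NN α β := by
    rintro z ⟨h0, h1, _, _, _, _⟩ e1 e2 e3
    have hz11 : z 1 1 = 1 / ((1 + α) * (1 + β)) := by
      rw [eq_div_iff hs.ne']
      nlinarith [e1, e2, e3, h1]
    funext j k
    fin_cases j <;> fin_cases k
    · show z 0 0 = α * β / ((1 + α) * (1 + β))
      have : z 0 1 = β * z 1 1 := by linarith
      rw [show z 0 0 = α * z 0 1 from by linarith, this, hz11]; field_simp; try ring
    · show z 0 1 = β / ((1 + α) * (1 + β))
      rw [show z 0 1 = β * z 1 1 from by linarith, hz11]; field_simp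
    · show z 1 0 = α / ((1 + α) * (1 + β))
      rw [show z 1 0 = α * z 1 1 from by linarith, hz11]; field_simp
    · exact hz11
  -- tight functionals
  have hf1 : a * (x 0 0 - α * x 0 1) + b * (y 0 0 - α * y 0 1) = 0 := by
    have h1 := H 0 0; have h2 := H 0 1
    have v1 : NN α β 0 0 = α * β / ((1 + α) * (1 + β)) := rfl
    have v2 : NN α β 0 1 = β / ((1 + α) * (1 + β)) := rfl
    rw [v1] at h1; rw [v2] at h2
    linear_combination h1 - α * h2
  have hf2 : a * (α * x 1 1 - x 1 0) + b * (α * y 1 1 - y 1 0) = 0 := by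
    have h1 := H 1 1; have h2 := H 1 0
    have v1 : NN α β 1 1 = 1 / ((1 + α) * (1 + β)) := rfl
    have v2 : NN α β 1 0 = α / ((1 + α) * (1 + β)) := rfl
    rw [v1] at h1; rw [v2] at h2
    linear_combination α * h1 - h2
  have hf3 : a * (β * x 1 1 - x 0 1) + b * (β * y 1 1 - y 0 1) = 0 := by
    have h1 := H 1 1; have h2 := H 0 1
    have v1 : NN α β 1 1 = 1 / ((1 + α) * (1 + β)) := rfl
    have v2 : NN α β 0 1 = β / ((1 + α) * (1 + β)) := rfl
    rw [v1] at h1; rw [v2] at h2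
    linear_combination β * h1 - h2
  have t1 := tight ha hb (by linarith [hx.2.2.1] : (0:ℝ) ≤ x 0 0 - α * x 0 1)
    (by linarith [hy.2.2.1] : (0:ℝ) ≤ y 0 0 - α * y 0 1) hf1
  have t2 := tight ha hb (by linarith [hx.2.2.2.1] : (0:ℝ) ≤ α * x 1 1 - x 1 0)
    (by linarith [hy.2.2.2.1] : (0:ℝ) ≤ α * y 1 1 - y 1 0) hf2
  have t3 := tight ha hb (by linarith [hx.2.2.2.2.2] : (0:ℝ) ≤ β * x 1 1 - x 0 1)
    (by linarith [hy.2.2.2.2.2] : (0:ℝ) ≤ β * y 1 1 - y 0 1) hf3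
  exact key x hx t1.1 t2.1 t3.1

include hα hβ in
theorem W2_extreme (hmem : W2 α β ∈ Q α β) : W2 α β ∈ Set.extremePoints ℝ (Q α β) := by
  have hα' := hα.ne'
  have hβ' := hβ.ne'
  have hs2 : (0:ℝ) < 1 + α + α * β := by positivity
  refine ⟨hmem, ?_⟩
  rintro x hx y hy ⟨a, b, ha, hb, hab, hsum⟩
  have H := coords hsum
  have key : ∀ z : Fin 2 → Fin 2 → ℝ, z ∈ Q α β →
      z 0 1 = 0 → α * z 1 1 - z 1 0 = 0 → z 0 0 - β * z 1 0 = 0 →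
      z = W2 α β := by
    rintro z ⟨h0, h1, _, _, _, _⟩ e1 e2 e3
    have hz11 : z 1 1 = 1 / (1 + α + α * β) := by
      rw [eq_div_iff hs2.ne']
      nlinarith [e1, e2, e3, h1]
    funext j k
    fin_cases j <;> fin_cases k
    · show z 0 0 = α * β / (1 + α + α * β)
      rw [show z 0 0 = β * z 1 0 from by linarith, show z 1 0 = α * z 1 1 from by linarith,
        hz11]; field_simp; try ring
    · exact e1
    · show z 1 0 = α / (1 + α + α * β)
      rw [show z 1 0 = α * z 1 1 from by linarith, hz11]; field_simp
    · exact hz11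
  have hf2 : a * (α * x 1 1 - x 1 0) + b * (α * y 1 1 - y 1 0) = 0 := by
    have h1 := H 1 1; have h2 := H 1 0
    have v1 : W2 α β 1 1 = 1 / (1 + α + α * β) := rfl
    have v2 : W2 α β 1 0 = α / (1 + α + α * β) := rfl
    rw [v1] at h1; rw [v2] at h2
    linear_combination α * h1 - h2
  have hf3 : a * (x 0 0 - β * x 1 0) + b * (y 0 0 - β * y 1 0) = 0 := by
    have h1 := H 0 0; have h2 := H 1 0
    have v1 : W2 α β 0 0 = α * β / (1 + α + α * β) := rfl
    have v2 : W2 α β 1 0 = α / (1 + α + α * β) := rfl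
    rw [v1] at h1; rw [v2] at h2
    linear_combination h1 - β * h2
  have t01 := tight ha hb (hx.1 0 1) (hy.1 0 1) (H 0 1)
  have t2 := tight ha hb (by linarith [hx.2.2.2.1] : (0:ℝ) ≤ α * x 1 1 - x 1 0)
    (by linarith [hy.2.2.2.1] : (0:ℝ) ≤ α * y 1 1 - y 1 0) hf2
  have t3 := tight ha hb (by linarith [hx.2.2.2.2.1] : (0:ℝ) ≤ x 0 0 - β * x 1 0)
    (by linarith [hy.2.2.2.2.1] : (0:ℝ) ≤ y 0 0 - β * y 1 0) hf3
  exact key x hx t01.1 t2.1 t3.1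

include hα hβ in
theorem W3_extreme (hmem : W3 α β ∈ Q α β) : W3 α β ∈ Set.extremePoints ℝ (Q α β) := by
  have hα' := hα.ne'
  have hβ' := hβ.ne'
  have hs3 : (0:ℝ) < 1 + β + α * β := by positivity
  refine ⟨hmem, ?_⟩
  rintro x hx y hy ⟨a, b, ha, hb, hab, hsum⟩
  have H := coords hsum
  have key : ∀ z : Fin 2 → Fin 2 → ℝ, z ∈ Q α β →
      z 1 0 = 0 → β * z 1 1 - z 0 1 = 0 → z 0 0 - α * z 0 1 = 0 →
      z = W3 α β := by
    rintro z ⟨h0, h1, _, _, _, _⟩ e1 e2 e3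
    have hz11 : z 1 1 = 1 / (1 + β + α * β) := by
      rw [eq_div_iff hs3.ne']
      nlinarith [e1, e2, e3, h1]
    funext j k
    fin_cases j <;> fin_cases k
    · show z 0 0 = α * β / (1 + β + α * β)
      rw [show z 0 0 = α * z 0 1 from by linarith, show z 0 1 = β * z 1 1 from by linarith,
        hz11]; field_simp; try ring
    · show z 0 1 = β / (1 + β + α * β)
      rw [show z 0 1 = β * z 1 1 from by linarith, hz11]; field_simp
    · exact e1
    · exact hz11
  have hf2 : a * (β * x 1 1 - x 0 1) + b * (β * y 1 1 - y 0 1) = 0 := by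
    have h1 := H 1 1; have h2 := H 0 1
    have v1 : W3 α β 1 1 = 1 / (1 + β + α * β) := rfl
    have v2 : W3 α β 0 1 = β / (1 + β + α * β) := rfl
    rw [v1] at h1; rw [v2] at h2
    linear_combination β * h1 - h2
  have hf3 : a * (x 0 0 - α * x 0 1) + b * (y 0 0 - α * y 0 1) = 0 := by
    have h1 := H 0 0; have h2 := H 0 1
    have v1 : W3 α β 0 0 = α * β / (1 + β + α * β) := rfl
    have v2 : W3 α β 0 1 = β / (1 + β + α * β) := rfl
    rw [v1] at h1; rw [v2] at h2
    linear_combination h1 - α * h2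
  have t10 := tight ha hb (hx.1 1 0) (hy.1 1 0) (H 1 0)
  have t2 := tight ha hb (by linarith [hx.2.2.2.2.2] : (0:ℝ) ≤ β * x 1 1 - x 0 1)
    (by linarith [hy.2.2.2.2.2] : (0:ℝ) ≤ β * y 1 1 - y 0 1) hf2
  have t3 := tight ha hb (by linarith [hx.2.2.1] : (0:ℝ) ≤ x 0 0 - α * x 0 1)
    (by linarith [hy.2.2.1] : (0:ℝ) ≤ y 0 0 - α * y 0 1) hf3
  exact key x hx t10.1 t2.1 t3.1

end

/-- a linear functional given by coefficients -/
noncomputable def L (c : Fin 2 → Fin 2 → ℝ) : (Fin 2 → Fin 2 → ℝ) →ₗ[ℝ] ℝ where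
  toFun v := c 0 0 * v 0 0 + c 0 1 * v 0 1 + c 1 0 * v 1 0 + c 1 1 * v 1 1
  map_add' x y := by simp only [Pi.add_apply]; ring
  map_smul' t x := by simp only [Pi.smul_apply, smul_eq_mul, RingHom.id_apply]; ring

lemma L_apply (c v : Fin 2 → Fin 2 → ℝ) :
    L c v = c 0 0 * v 0 0 + c 0 1 * v 0 1 + c 1 0 * v 1 0 + c 1 1 * v 1 1 := rfl

lemma finrank_le_aux {W : Type*} [AddCommGroup W] [Module ℝ W] [FiniteDimensional ℝ W]
    (S : Set (Fin 2 → Fin 2 → ℝ)) (φ : (Fin 2 → Fin 2 → ℝ) →ₗ[ℝ] W)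
    (h : ∀ v ∈ vectorSpan ℝ S, φ v = 0 → v = 0) :
    Module.finrank ℝ (affineSpan ℝ S).direction ≤ Module.finrank ℝ W := by
  rw [direction_affineSpan]
  apply LinearMap.finrank_le_finrank_of_injective (f := φ.domRestrict (vectorSpan ℝ S))
  intro u v huv
  have : φ (u.1 - v.1) = 0 := by
    rw [map_sub, sub_eq_zero]
    exact huv
  have h0 := h (u.1 - v.1) (sub_mem u.2 v.2) this
  exact Subtype.ext (by rwa [sub_eq_zero] at h0)


lemma vectorSpan_le_ker (S : Set (Fin 2 → Fin 2 → ℝ)) (f : (Fin 2 → Fin 2 → ℝ) →ₗ[ℝ] ℝ)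
    (hf : ∀ p ∈ S, f p = 0) : vectorSpan ℝ S ≤ LinearMap.ker f := by
  rw [vectorSpan_def, Submodule.span_le]
  rintro u hu
  rw [Set.mem_vsub] at hu
  obtain ⟨x, hx, y, hy, rfl⟩ := hu
  simp [LinearMap.mem_ker, vsub_eq_sub, map_sub, hf x hx, hf y hy]

lemma dim_le_rowzero (S : Set (Fin 2 → Fin 2 → ℝ)) (h : ∀ p ∈ S, p 1 0 = 0 ∧ p 1 1 = 0) :
    Module.finrank ℝ (affineSpan ℝ S).direction ≤ 2 := by
  have k1 := vectorSpan_le_ker S (L ![![0,0],![1,0]]) (fun p hp => by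
    show (0:ℝ) * p 0 0 + 0 * p 0 1 + 1 * p 1 0 + 0 * p 1 1 = 0
    have := (h p hp).1; linarith)
  have k2 := vectorSpan_le_ker S (L ![![0,0],![0,1]]) (fun p hp => by
    show (0:ℝ) * p 0 0 + 0 * p 0 1 + 0 * p 1 0 + 1 * p 1 1 = 0
    have := (h p hp).2; linarith)
  have := finrank_le_aux S (LinearMap.proj 0) (fun v hv hv0 => by
    have h10 : (0:ℝ) * v 0 0 + 0 * v 0 1 + 1 * v 1 0 + 0 * v 1 1 = 0 := k1 hv
    have h11 : (0:ℝ) * v 0 0 + 0 * v 0 1 + 0 * v 1 0 + 1 * v 1 1 = 0 := k2 hv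
    have h00 : v 0 0 = 0 := congr_fun hv0 0
    have h01 : v 0 1 = 0 := congr_fun hv0 1
    funext j k
    fin_cases j <;> fin_cases k
    · exact h00
    · exact h01
    · show v 1 0 = 0; linarith
    · show v 1 1 = 0; linarith)
  simpa using this

lemma dim_le_rowzero' (S : Set (Fin 2 → Fin 2 → ℝ)) (h : ∀ p ∈ S, p 0 0 = 0 ∧ p 0 1 = 0) :
    Module.finrank ℝ (affineSpan ℝ S).direction ≤ 2 := by
  have k1 := vectorSpan_le_ker S (L ![![1,0],![0,0]]) (fun p hp => by
    show (1:ℝ) * p 0 0 + 0 * p 0 1 + 0 * p 1 0 + 0 * p 1 1 = 0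
    have := (h p hp).1; linarith)
  have k2 := vectorSpan_le_ker S (L ![![0,1],![0,0]]) (fun p hp => by
    show (0:ℝ) * p 0 0 + 1 * p 0 1 + 0 * p 1 0 + 0 * p 1 1 = 0
    have := (h p hp).2; linarith)
  have := finrank_le_aux S (LinearMap.proj 1) (fun v hv hv0 => by
    have h00 : (1:ℝ) * v 0 0 + 0 * v 0 1 + 0 * v 1 0 + 0 * v 1 1 = 0 := k1 hv
    have h01 : (0:ℝ) * v 0 0 + 1 * v 0 1 + 0 * v 1 0 + 0 * v 1 1 = 0 := k2 hv
    have h10 : v 1 0 = 0 := congr_fun hv0 0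
    have h11 : v 1 1 = 0 := congr_fun hv0 1
    funext j k
    fin_cases j <;> fin_cases k
    · show v 0 0 = 0; linarith
    · show v 0 1 = 0; linarith
    · exact h10
    · exact h11)
  simpa using this

lemma dim_le_colzero (S : Set (Fin 2 → Fin 2 → ℝ)) (h : ∀ p ∈ S, p 0 1 = 0 ∧ p 1 1 = 0) :
    Module.finrank ℝ (affineSpan ℝ S).direction ≤ 2 := by
  have k1 := vectorSpan_le_ker S (L ![![0,1],![0,0]]) (fun p hp => by
    show (0:ℝ) * p 0 0 + 1 * p 0 1 + 0 * p 1 0 + 0 * p 1 1 = 0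
    have := (h p hp).1; linarith)
  have k2 := vectorSpan_le_ker S (L ![![0,0],![0,1]]) (fun p hp => by
    show (0:ℝ) * p 0 0 + 0 * p 0 1 + 0 * p 1 0 + 1 * p 1 1 = 0
    have := (h p hp).2; linarith)
  have := finrank_le_aux S
    (LinearMap.pi (fun i => (LinearMap.proj (0 : Fin 2)).comp (LinearMap.proj i)))
    (fun v hv hv0 => by
      have h01 : (0:ℝ) * v 0 0 + 1 * v 0 1 + 0 * v 1 0 + 0 * v 1 1 = 0 := k1 hv
      have h11 : (0:ℝ) * v 0 0 + 0 * v 0 1 + 0 * v 1 0 + 1 * v 1 1 = 0 := k2 hv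
      have h00 : v 0 0 = 0 := congr_fun hv0 0
      have h10 : v 1 0 = 0 := congr_fun hv0 1
      funext j k
      fin_cases j <;> fin_cases k
      · exact h00
      · show v 0 1 = 0; linarith
      · exact h10
      · show v 1 1 = 0; linarith)
  simpa using this

lemma dim_le_colzero' (S : Set (Fin 2 → Fin 2 → ℝ)) (h : ∀ p ∈ S, p 0 0 = 0 ∧ p 1 0 = 0) :
    Module.finrank ℝ (affineSpan ℝ S).direction ≤ 2 := by
  have k1 := vectorSpan_le_ker S (L ![![1,0],![0,0]]) (fun p hp => by
    show (1:ℝ) * p 0 0 + 0 * p 0 1 + 0 * p 1 0 + 0 * p 1 1 = 0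
    have := (h p hp).1; linarith)
  have k2 := vectorSpan_le_ker S (L ![![0,0],![1,0]]) (fun p hp => by
    show (0:ℝ) * p 0 0 + 0 * p 0 1 + 1 * p 1 0 + 0 * p 1 1 = 0
    have := (h p hp).2; linarith)
  have := finrank_le_aux S
    (LinearMap.pi (fun i => (LinearMap.proj (1 : Fin 2)).comp (LinearMap.proj i)))
    (fun v hv hv0 => by
      have h00 : (1:ℝ) * v 0 0 + 0 * v 0 1 + 0 * v 1 0 + 0 * v 1 1 = 0 := k1 hv
      have h10 : (0:ℝ) * v 0 0 + 0 * v 0 1 + 1 * v 1 0 + 0 * v 1 1 = 0 := k2 hv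
      have h01 : v 0 1 = 0 := congr_fun hv0 0
      have h11 : v 1 1 = 0 := congr_fun hv0 1
      funext j k
      fin_cases j <;> fin_cases k
      · show v 0 0 = 0; linarith
      · exact h01
      · show v 1 0 = 0; linarith
      · exact h11)
  simpa using this

lemma dim_le_line (S : Set (Fin 2 → Fin 2 → ℝ)) (Y₁ Y₂ Z₁ Z₂ : ℝ)
    (hY₂0 : Y₂ ≠ 0) (hZ₂0 : Z₂ ≠ 0)
    (h : ∀ p ∈ S, Y₁ * p 0 0 + Y₂ * p 0 1 = 0 ∧ Y₁ * p 1 0 + Y₂ * p 1 1 = 0 ∧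
      Z₁ * p 0 0 + Z₂ * p 1 0 = 0) :
    Module.finrank ℝ (affineSpan ℝ S).direction ≤ 1 := by
  have k1 := vectorSpan_le_ker S (L ![![Y₁,Y₂],![0,0]]) (fun p hp => by
    show Y₁ * p 0 0 + Y₂ * p 0 1 + 0 * p 1 0 + 0 * p 1 1 = 0
    have := (h p hp).1; linarith)
  have k2 := vectorSpan_le_ker S (L ![![0,0],![Y₁,Y₂]]) (fun p hp => by
    show (0:ℝ) * p 0 0 + 0 * p 0 1 + Y₁ * p 1 0 + Y₂ * p 1 1 = 0
    have := (h p hp).2.1; linarith)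
  have k3 := vectorSpan_le_ker S (L ![![Z₁,0],![Z₂,0]]) (fun p hp => by
    show Z₁ * p 0 0 + 0 * p 0 1 + Z₂ * p 1 0 + 0 * p 1 1 = 0
    have := (h p hp).2.2; linarith)
  have := finrank_le_aux S
    ((LinearMap.proj (0 : Fin 2) : (Fin 2 → ℝ) →ₗ[ℝ] ℝ).comp
      (LinearMap.proj (0 : Fin 2) : (Fin 2 → Fin 2 → ℝ) →ₗ[ℝ] (Fin 2 → ℝ)))
    (fun v hv hv0 => by
      have e1 : Y₁ * v 0 0 + Y₂ * v 0 1 + 0 * v 1 0 + 0 * v 1 1 = 0 := k1 hv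
      have e2 : (0:ℝ) * v 0 0 + 0 * v 0 1 + Y₁ * v 1 0 + Y₂ * v 1 1 = 0 := k2 hv
      have e3 : Z₁ * v 0 0 + 0 * v 0 1 + Z₂ * v 1 0 + 0 * v 1 1 = 0 := k3 hv
      have h00 : v 0 0 = 0 := hv0
      have h01 : v 0 1 = 0 := by
        have : Y₂ * v 0 1 = 0 := by rw [h00] at e1; linarith
        exact (mul_eq_zero.mp this).resolve_left hY₂0
      have h10 : v 1 0 = 0 := by
        have : Z₂ * v 1 0 = 0 := by rw [h00] at e3; linarith
        exact (mul_eq_zero.mp this).resolve_left hZ₂0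
      have h11 : v 1 1 = 0 := by
        have : Y₂ * v 1 1 = 0 := by rw [h10] at e2; linarith
        exact (mul_eq_zero.mp this).resolve_left hY₂0
      funext j k
      fin_cases j <;> fin_cases k
      · exact h00
      · exact h01
      · exact h10
      · exact h11)
  simpa using this


theorem extremePoints_Q (hα : 0 < α) (hβ : 0 < β) :
    Set.extremePoints ℝ (Q α β) = {V1, V2, NN α β, W2 α β, W3 α β} := by
  have hQ : Q α β = convexHull ℝ {V1, V2, NN α β, W2 α β, W3 α β} := by
    refine Subset.antisymm (Q_subset_hull hα hβ) (convexHull_min ?_ convex_Q)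
    rintro x hx
    simp only [Set.mem_insert_iff, Set.mem_singleton_iff] at hx
    rcases hx with rfl | rfl | rfl | rfl | rfl
    · exact V1_mem
    · exact V2_mem hα hβ
    · exact NN_mem hα hβ
    · exact W2_mem hα hβ
    · exact W3_mem hα hβ
  refine Subset.antisymm ?_ ?_
  · rw [hQ]
    exact extremePoints_convexHull_subset
  · rintro x hx
    simp only [Set.mem_insert_iff, Set.mem_singleton_iff] at hx
    rcases hx with rfl | rfl | rfl | rfl | rfl
    · exact V1_extreme V1_mem
    · exact V2_extreme (V2_mem hα hβ)
    · exact NN_extreme hα hβ (NN_mem hα hβ)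
    · exact W2_extreme hα hβ (W2_mem hα hβ)
    · exact W3_extreme hα hβ (W3_mem hα hβ)

theorem ncard5 (hα : 0 < α) (hβ : 0 < β) :
    ({V1, V2, NN α β, W2 α β, W3 α β} : Set (Fin 2 → Fin 2 → ℝ)).ncard = 5 := by
  have hs : (0:ℝ) < (1 + α) * (1 + β) := by positivity
  have hs2 : (0:ℝ) < 1 + α + α * β := by positivity
  have hs3 : (0:ℝ) < 1 + β + α * β := by positivity
  have hne : ∀ (u v : Fin 2 → Fin 2 → ℝ) (j k : Fin 2), u j k ≠ v j k → u ≠ v :=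
    fun u v j k h hh => h (by rw [hh])
  have d12 : V1 ≠ V2 := hne _ _ 1 1 (show (0:ℝ) ≠ 1 by norm_num)
  have d13 : V1 ≠ NN α β :=
    hne _ _ 1 1 (ne_of_lt (show (0:ℝ) < 1/((1+α)*(1+β)) by positivity))
  have d14 : V1 ≠ W2 α β :=
    hne _ _ 1 1 (ne_of_lt (show (0:ℝ) < 1/(1+α+α*β) by positivity))
  have d15 : V1 ≠ W3 α β :=
    hne _ _ 1 1 (ne_of_lt (show (0:ℝ) < 1/(1+β+α*β) by positivity))
  have d23 : V2 ≠ NN α β :=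
    hne _ _ 1 1 (ne_of_gt (show 1/((1+α)*(1+β)) < (1:ℝ) by
      rw [div_lt_one hs]; nlinarith))
  have d24 : V2 ≠ W2 α β :=
    hne _ _ 1 1 (ne_of_gt (show 1/(1+α+α*β) < (1:ℝ) by
      rw [div_lt_one hs2]; nlinarith))
  have d25 : V2 ≠ W3 α β :=
    hne _ _ 1 1 (ne_of_gt (show 1/(1+β+α*β) < (1:ℝ) by
      rw [div_lt_one hs3]; nlinarith))
  have d34 : NN α β ≠ W2 α β :=
    hne _ _ 0 1 ((show (0:ℝ) < β/((1+α)*(1+β)) by positivity).ne')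
  have d35 : NN α β ≠ W3 α β :=
    hne _ _ 1 1 (ne_of_lt (show 1/((1+α)*(1+β)) < 1/(1+β+α*β) by
      apply one_div_lt_one_div_of_lt hs3; nlinarith))
  have d45 : W2 α β ≠ W3 α β :=
    hne _ _ 0 1 ((show (0:ℝ) < β/(1+β+α*β) by positivity).ne)
  have e45 : ({W2 α β, W3 α β} : Set (Fin 2 → Fin 2 → ℝ)).ncard = 2 := Set.ncard_pair d45
  have e345 : ({NN α β, W2 α β, W3 α β} : Set (Fin 2 → Fin 2 → ℝ)).ncard = 3 := by
    rw [Set.ncard_insert_of_notMem (by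
      simp only [Set.mem_insert_iff, Set.mem_singleton_iff]; push_neg
      exact ⟨d34, d35⟩), e45]
  have e2345 : ({V2, NN α β, W2 α β, W3 α β} : Set (Fin 2 → Fin 2 → ℝ)).ncard = 4 := by
    rw [Set.ncard_insert_of_notMem (by
      simp only [Set.mem_insert_iff, Set.mem_singleton_iff]; push_neg
      exact ⟨d23, d24, d25⟩), e345]
  rw [Set.ncard_insert_of_notMem (by
    simp only [Set.mem_insert_iff, Set.mem_singleton_iff]; push_neg
    exact ⟨d12, d13, d14, d15⟩), e2345]

/-- the column swap linear map -/
def cswapL : (Fin 2 → Fin 2 → ℝ) →ₗ[ℝ] (Fin 2 → Fin 2 → ℝ) where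
  toFun p := fun j k => p j (k + 1)
  map_add' x y := rfl
  map_smul' t x := rfl

lemma cswapL_invol : Function.Involutive cswapL := by
  intro p
  funext j k
  show p j (k + 1 + 1) = p j k
  congr 1
  fin_cases k <;> rfl

/-- the column swap linear equivalence -/
noncomputable def cswap : (Fin 2 → Fin 2 → ℝ) ≃ₗ[ℝ] (Fin 2 → Fin 2 → ℝ) :=
  LinearEquiv.ofInvolutive cswapL cswapL_invol

lemma cswap_invol : Function.Involutive ⇑cswap := fun p => cswapL_invol p

end CE2x2

set_option maxHeartbeats 2000000 in
open CE2x2 in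
/-- For a generic `(2 × 2)`-game, if the correlated equilibrium polytope has maximal
dimension `3` then it has exactly `5` vertices. -/
theorem five_vertices_of_maximal_dim_2x2
    (X1 X2 : Fin 2 → Fin 2 → ℝ)
    (Y₁ Y₂ Z₁ Z₂ : ℝ)
    (hY₁ : Y₁ = X1 0 0 - X1 1 0) (hY₂ : Y₂ = X1 0 1 - X1 1 1)
    (hZ₁ : Z₁ = X2 0 0 - X2 0 1) (hZ₂ : Z₂ = X2 1 0 - X2 1 1)
    (hY₁0 : Y₁ ≠ 0) (hY₂0 : Y₂ ≠ 0) (hZ₁0 : Z₁ ≠ 0) (hZ₂0 : Z₂ ≠ 0)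
    (hdim : Module.finrank ℝ (affineSpan ℝ (CorrelatedEqPolytope X1 X2)).direction = 3) :
    (Set.extremePoints ℝ (CorrelatedEqPolytope X1 X2)).ncard = 5 := by
  have memiff := mem_CE_iff X1 X2 Y₁ Y₂ Z₁ Z₂ hY₁ hY₂ hZ₁ hZ₂
  rcases hY₁0.lt_or_gt with hy1 | hy1 <;> rcases hY₂0.lt_or_gt with hy2 | hy2
  · -- Y₁ < 0, Y₂ < 0 : first row forced to zero
    exfalso
    have hle := dim_le_rowzero' (CorrelatedEqPolytope X1 X2) (fun p hp => by
      obtain ⟨h0, h1, h2, h3, h4, h5⟩ := (memiff p).1 hp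
      exact ⟨by nlinarith [h0 0 0, h0 0 1], by nlinarith [h0 0 0, h0 0 1]⟩)
    omega
  · -- Y₁ < 0, Y₂ > 0
    rcases hZ₁0.lt_or_gt with hz1 | hz1 <;> rcases hZ₂0.lt_or_gt with hz2 | hz2
    · -- Z₁ < 0, Z₂ < 0 : first column forced to zero
      exfalso
      have hle := dim_le_colzero' (CorrelatedEqPolytope X1 X2) (fun p hp => by
        obtain ⟨h0, h1, h2, h3, h4, h5⟩ := (memiff p).1 hp
        exact ⟨by nlinarith [h0 0 0, h0 1 0], by nlinarith [h0 0 0, h0 1 0]⟩)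
      omega
    · -- Y₁ < 0, Y₂ > 0, Z₁ < 0, Z₂ > 0 : the generic case, via column swap
      have hα : 0 < -Y₁/Y₂ := div_pos (by linarith) hy2
      have hβ : 0 < -Z₂/Z₁ := by
        rw [div_pos_iff]; right; constructor <;> linarith
      have hQeq : CorrelatedEqPolytope X1 X2 = ⇑cswap '' Q (-Y₁/Y₂) (-Z₂/Z₁) := by
        rw [Set.image_eq_preimage_of_inverse cswap_invol cswap_invol]
        ext p
        rw [memiff p]
        simp only [Set.mem_preimage]
        have hcs : ⇑cswap p = fun j k => p j (k + 1) := rfl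
        rw [hcs]
        have ei0 : (0 : Fin 2) + 1 = 1 := rfl
        have ei1 : (1 : Fin 2) + 1 = 0 := rfl
        simp only [Q, Set.mem_setOf_eq, ei0, ei1]
        constructor
        · rintro ⟨h0, h1, h2, h3, h4, h5⟩
          refine ⟨fun j k => h0 j (k + 1), by linarith, ?_, ?_, ?_, ?_⟩
          · rw [div_mul_eq_mul_div, div_le_iff₀ hy2]; nlinarith
          · rw [div_mul_eq_mul_div, le_div_iff₀ hy2]; nlinarith
          · rw [div_mul_eq_mul_div, div_le_iff_of_neg hz1]; nlinarith
          · rw [div_mul_eq_mul_div, le_div_iff_of_neg hz1]; nlinarith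
        · rintro ⟨h0, h1, h2, h3, h4, h5⟩
          rw [div_mul_eq_mul_div, div_le_iff₀ hy2] at h2
          rw [div_mul_eq_mul_div, le_div_iff₀ hy2] at h3
          rw [div_mul_eq_mul_div, div_le_iff_of_neg hz1] at h4
          rw [div_mul_eq_mul_div, le_div_iff_of_neg hz1] at h5
          have h0' : ∀ (j k : Fin 2), 0 ≤ p j k := by
            intro j k
            have := h0 j (k + 1)
            fin_cases k
            · exact h0 j 1
            · exact h0 j 0
          exact ⟨h0', by linarith, by nlinarith, by nlinarith, by nlinarith, by nlinarith⟩
      rw [hQeq, ← image_extremePoints,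
        Set.ncard_image_of_injective _ cswap.injective, extremePoints_Q hα hβ, ncard5 hα hβ]
    · -- Y₁ < 0, Y₂ > 0, Z₁ > 0, Z₂ < 0 : degenerate line case
      exfalso
      have hle := dim_le_line (CorrelatedEqPolytope X1 X2) Y₁ Y₂ Z₁ Z₂ hY₂0 hZ₂0
        (fun p hp => by
          obtain ⟨h0, h1, h2, h3, h4, h5⟩ := (memiff p).1 hp
          have c1 : (0:ℝ) < 1/Y₂ := one_div_pos.mpr hy2
          have c2 : (0:ℝ) < 1/Z₁ := one_div_pos.mpr hz1
          have c3 : (0:ℝ) < (-Z₂/Z₁)/Y₂ := div_pos (div_pos (by linarith) hz1) hy2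
          have c4 : (0:ℝ) < (-Y₁/Y₂)/Z₁ := div_pos (div_pos (by linarith) hy2) hz1
          have hA : 0 ≤ (1/Y₂) * (Y₁ * p 0 0 + Y₂ * p 0 1) := mul_nonneg c1.le h2
          have hD : 0 ≤ (-1/Z₁) * (Z₁ * p 0 1 + Z₂ * p 1 1) :=
            mul_nonneg_iff.mpr (Or.inr ⟨by rw [neg_div]; exact neg_nonpos.2 c2.le, h5⟩)
          have hB : 0 ≤ (-((-Z₂/Z₁)/Y₂)) * (Y₁ * p 1 0 + Y₂ * p 1 1) :=
            mul_nonneg_iff.mpr (Or.inr ⟨neg_nonpos.2 c3.le, h3⟩)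
          have hC : 0 ≤ ((-Y₁/Y₂)/Z₁) * (Z₁ * p 0 0 + Z₂ * p 1 0) := mul_nonneg c4.le h4
          have hid : (1/Y₂) * (Y₁ * p 0 0 + Y₂ * p 0 1)
              + (-1/Z₁) * (Z₁ * p 0 1 + Z₂ * p 1 1)
              + (-((-Z₂/Z₁)/Y₂)) * (Y₁ * p 1 0 + Y₂ * p 1 1)
              + ((-Y₁/Y₂)/Z₁) * (Z₁ * p 0 0 + Z₂ * p 1 0) = 0 := by
            field_simp
            ring
          refine ⟨?_, ?_, ?_⟩
          · have h' : (1/Y₂) * (Y₁ * p 0 0 + Y₂ * p 0 1) = 0 := by linarith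
            rcases mul_eq_zero.mp h' with h'' | h''
            · exact absurd h'' c1.ne'
            · exact h''
          · have h' : (-((-Z₂/Z₁)/Y₂)) * (Y₁ * p 1 0 + Y₂ * p 1 1) = 0 := by linarith
            rcases mul_eq_zero.mp h' with h'' | h''
            · exact absurd h'' (by simpa using c3.ne')
            · exact h''
          · have h' : ((-Y₁/Y₂)/Z₁) * (Z₁ * p 0 0 + Z₂ * p 1 0) = 0 := by linarith
            rcases mul_eq_zero.mp h' with h'' | h''
            · exact absurd h'' c4.ne'
            · exact h'')
      omega
    · -- Z₁ > 0, Z₂ > 0 : second column forced to zero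
      exfalso
      have hle := dim_le_colzero (CorrelatedEqPolytope X1 X2) (fun p hp => by
        obtain ⟨h0, h1, h2, h3, h4, h5⟩ := (memiff p).1 hp
        exact ⟨by nlinarith [h0 0 1, h0 1 1], by nlinarith [h0 0 1, h0 1 1]⟩)
      omega
  · -- Y₁ > 0, Y₂ < 0
    rcases hZ₁0.lt_or_gt with hz1 | hz1 <;> rcases hZ₂0.lt_or_gt with hz2 | hz2
    · -- Z₁ < 0, Z₂ < 0 : first column forced to zero
      exfalso
      have hle := dim_le_colzero' (CorrelatedEqPolytope X1 X2) (fun p hp => by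
        obtain ⟨h0, h1, h2, h3, h4, h5⟩ := (memiff p).1 hp
        exact ⟨by nlinarith [h0 0 0, h0 1 0], by nlinarith [h0 0 0, h0 1 0]⟩)
      omega
    · -- Y₁ > 0, Y₂ < 0, Z₁ < 0, Z₂ > 0 : degenerate line case
      exfalso
      have hle := dim_le_line (CorrelatedEqPolytope X1 X2) Y₁ Y₂ Z₁ Z₂ hY₂0 hZ₂0
        (fun p hp => by
          obtain ⟨h0, h1, h2, h3, h4, h5⟩ := (memiff p).1 hp
          have c1 : (0:ℝ) < 1/Z₂ := one_div_pos.mpr hz2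
          have c2 : (0:ℝ) < 1/Y₁ := one_div_pos.mpr hy1
          have c3 : (0:ℝ) < (-Y₂/Y₁)/Z₂ := div_pos (div_pos (by linarith) hy1) hz2
          have c4 : (0:ℝ) < (-Z₁/Z₂)/Y₁ := div_pos (div_pos (by linarith) hz2) hy1
          have hC : 0 ≤ (1/Z₂) * (Z₁ * p 0 0 + Z₂ * p 1 0) := mul_nonneg c1.le h4
          have hB : 0 ≤ (-1/Y₁) * (Y₁ * p 1 0 + Y₂ * p 1 1) :=
            mul_nonneg_iff.mpr (Or.inr ⟨by rw [neg_div]; exact neg_nonpos.2 c2.le, h3⟩)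
          have hD : 0 ≤ (-((-Y₂/Y₁)/Z₂)) * (Z₁ * p 0 1 + Z₂ * p 1 1) :=
            mul_nonneg_iff.mpr (Or.inr ⟨neg_nonpos.2 c3.le, h5⟩)
          have hA : 0 ≤ ((-Z₁/Z₂)/Y₁) * (Y₁ * p 0 0 + Y₂ * p 0 1) := mul_nonneg c4.le h2
          have hid : (1/Z₂) * (Z₁ * p 0 0 + Z₂ * p 1 0)
              + (-1/Y₁) * (Y₁ * p 1 0 + Y₂ * p 1 1)
              + (-((-Y₂/Y₁)/Z₂)) * (Z₁ * p 0 1 + Z₂ * p 1 1)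
              + ((-Z₁/Z₂)/Y₁) * (Y₁ * p 0 0 + Y₂ * p 0 1) = 0 := by
            field_simp
            ring
          refine ⟨?_, ?_, ?_⟩
          · have h' : ((-Z₁/Z₂)/Y₁) * (Y₁ * p 0 0 + Y₂ * p 0 1) = 0 := by linarith
            rcases mul_eq_zero.mp h' with h'' | h''
            · exact absurd h'' c4.ne'
            · exact h''
          · have h' : (-1/Y₁) * (Y₁ * p 1 0 + Y₂ * p 1 1) = 0 := by linarith
            rcases mul_eq_zero.mp h' with h'' | h''
            · exact absurd h'' (by simpa using c2.ne')
            · exact h''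
          · have h' : (1/Z₂) * (Z₁ * p 0 0 + Z₂ * p 1 0) = 0 := by linarith
            rcases mul_eq_zero.mp h' with h'' | h''
            · exact absurd h'' c1.ne'
            · exact h'')
      omega
    · -- Y₁ > 0, Y₂ < 0, Z₁ > 0, Z₂ < 0 : the generic case
      have hα : 0 < -Y₂/Y₁ := div_pos (by linarith) hy1
      have hβ : 0 < -Z₂/Z₁ := div_pos (by linarith) hz1
      have hQeq : CorrelatedEqPolytope X1 X2 = Q (-Y₂/Y₁) (-Z₂/Z₁) := by
        ext p
        rw [memiff p]
        simp only [Q, Set.mem_setOf_eq]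
        constructor
        · rintro ⟨h0, h1, h2, h3, h4, h5⟩
          refine ⟨h0, h1, ?_, ?_, ?_, ?_⟩
          · rw [div_mul_eq_mul_div, div_le_iff₀ hy1]; nlinarith
          · rw [div_mul_eq_mul_div, le_div_iff₀ hy1]; nlinarith
          · rw [div_mul_eq_mul_div, div_le_iff₀ hz1]; nlinarith
          · rw [div_mul_eq_mul_div, le_div_iff₀ hz1]; nlinarith
        · rintro ⟨h0, h1, h2, h3, h4, h5⟩
          rw [div_mul_eq_mul_div, div_le_iff₀ hy1] at h2
          rw [div_mul_eq_mul_div, le_div_iff₀ hy1] at h3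
          rw [div_mul_eq_mul_div, div_le_iff₀ hz1] at h4
          rw [div_mul_eq_mul_div, le_div_iff₀ hz1] at h5
          exact ⟨h0, h1, by nlinarith, by nlinarith, by nlinarith, by nlinarith⟩
      rw [hQeq, extremePoints_Q hα hβ, ncard5 hα hβ]
    · -- Z₁ > 0, Z₂ > 0 : second column forced to zero
      exfalso
      have hle := dim_le_colzero (CorrelatedEqPolytope X1 X2) (fun p hp => by
        obtain ⟨h0, h1, h2, h3, h4, h5⟩ := (memiff p).1 hp
        exact ⟨by nlinarith [h0 0 1, h0 1 1], by nlinarith [h0 0 1, h0 1 1]⟩)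
      omega
  · -- Y₁ > 0, Y₂ > 0 : second row forced to zero
    exfalso
    have hle := dim_le_rowzero (CorrelatedEqPolytope X1 X2) (fun p hp => by
      obtain ⟨h0, h1, h2, h3, h4, h5⟩ := (memiff p).1 hp
      exact ⟨by nlinarith [h0 1 0, h0 1 1], by nlinarith [h0 1 0, h0 1 1]⟩)
    omega
end
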